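/- arXiv:0910.1623 — 3 statements merged into one kernel-verified Lean document; each statement's English description precedes it below -/
import Mathlib

section
/- Let y = Ax + w with x supported on N, T and Δ disjoint with N ⊆ N_e := T ∪ Δ, A_{N_e} of full column rank, M = I − A_T(A_T'A_T)^{-1}A_T', and c the least-squares estimate on N_e. If ‖A'(y − A_{N_e}c_{N_e})‖_∞ < γ·[1 − max_{ω∉N_e} ‖(A_Δ'MA_Δ)^{-1}A_Δ'MA_ω‖₁], then the global minimizer b̃ of L(b) = (1/2)‖y−Ab‖₂² + γ‖b_{T^c}‖₁ is unique, supported on N_e, and satisfies ‖b̃ − x‖_∞ ≤ γ·max(‖(A_T'A_T)^{-1}A_T'A_Δ(A_Δ'MA_Δ)^{-1}‖_∞, ‖(A_Δ'MA_Δ)^{-1}‖_∞) + ‖(A_{N_e}'A_{N_e})^{-1}A_{N_e}'‖_∞ · ‖w‖_∞. -/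
open Matrix Finset

noncomputable section

variable {n m : ℕ}

/-- Submatrix of columns of `A` indexed by `S`. -/
def cols (A : Matrix (Fin n) (Fin m) ℝ) (S : Finset (Fin m)) :
    Matrix (Fin n) {j // j ∈ S} ℝ := Matrix.of fun i j => A i j.1

/-- Subvector of `b` on indices in `S`. -/
def subv (b : Fin m → ℝ) (S : Finset (Fin m)) : {j // j ∈ S} → ℝ := fun j => b j.1

/-- `b` is supported on `S`. -/
def suppOn (b : Fin m → ℝ) (S : Finset (Fin m)) : Prop := ∀ j, j ∉ S → b j = 0

def l2v {k : Type*} [Fintype k] (v : k → ℝ) : ℝ := Real.sqrt (∑ i, v i ^ 2)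

def l1v {k : Type*} [Fintype k] (v : k → ℝ) : ℝ := ∑ i, |v i|

def linfv {k : Type*} [Fintype k] (v : k → ℝ) : ℝ := ⨆ i, |v i|

/-- ℓ¹ norm of the subvector of `b` on the complement of `T`. -/
def l1c (b : Fin m → ℝ) (T : Finset (Fin m)) : ℝ := ∑ j ∈ Tᶜ, |b j|

/-- Induced ℓ∞→ℓ∞ operator norm (max absolute row sum). -/
def matInf {k l : Type*} [Fintype k] [Fintype l] (B : Matrix k l ℝ) : ℝ :=
  ⨆ i, ∑ j, |B i j|

/-- Spectral norm (ℓ²→ℓ² operator norm). -/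
def spec {k l : Type*} [Fintype k] [Fintype l] (B : Matrix k l ℝ) : ℝ :=
  sSup ((fun x => l2v (B.mulVec x)) '' {x | l2v x ≤ 1})

/-- The modified-BPDN objective L(b) = (1/2)‖y − Ab‖₂² + γ‖b_{Tᶜ}‖₁. -/
def objL (A : Matrix (Fin n) (Fin m) ℝ) (y : Fin n → ℝ) (γ : ℝ) (T : Finset (Fin m))
    (b : Fin m → ℝ) : ℝ :=
  (1/2) * (∑ i, (y i - A.mulVec b i) ^ 2) + γ * l1c b T

/-- Orthogonal projector M = I − A_T (A_Tᵀ A_T)⁻¹ A_Tᵀ. -/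
def projM (A : Matrix (Fin n) (Fin m) ℝ) (T : Finset (Fin m)) : Matrix (Fin n) (Fin n) ℝ :=
  1 - cols A T * ((cols A T)ᵀ * cols A T)⁻¹ * (cols A T)ᵀ

/-- Least squares coefficients on `S` : (A_Sᵀ A_S)⁻¹ A_Sᵀ y. -/
def lsq (A : Matrix (Fin n) (Fin m) ℝ) (S : Finset (Fin m)) (y : Fin n → ℝ) :
    {j // j ∈ S} → ℝ :=
  ((cols A S)ᵀ * cols A S)⁻¹.mulVec ((cols A S)ᵀ.mulVec y)

/-- Least squares estimate on `S`, as a vector in ℝᵐ supported on `S`. -/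
def lsqFull (A : Matrix (Fin n) (Fin m) ℝ) (S : Finset (Fin m)) (y : Fin n → ℝ) :
    Fin m → ℝ := fun j => if h : j ∈ S then lsq A S y ⟨j, h⟩ else 0

/-- The matrix A_Δᵀ M A_Δ. -/
def schur (A : Matrix (Fin n) (Fin m) ℝ) (T Δ : Finset (Fin m)) :
    Matrix {j // j ∈ Δ} {j // j ∈ Δ} ℝ :=
  (cols A Δ)ᵀ * projM A T * cols A Δ

/-- The matrix (A_Tᵀ A_T)⁻¹ A_Tᵀ A_Δ (A_Δᵀ M A_Δ)⁻¹. -/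
def crossMat (A : Matrix (Fin n) (Fin m) ℝ) (T Δ : Finset (Fin m)) :
    Matrix {j // j ∈ T} {j // j ∈ Δ} ℝ :=
  ((cols A T)ᵀ * cols A T)⁻¹ * ((cols A T)ᵀ * cols A Δ) * (schur A T Δ)⁻¹

/-- The exact-recovery-coefficient quantity ‖(A_Δᵀ M A_Δ)⁻¹ A_Δᵀ M A_ω‖₁. -/
def erc (A : Matrix (Fin n) (Fin m) ℝ) (T Δ : Finset (Fin m)) (ω : Fin m) : ℝ :=
  l1v ((schur A T Δ)⁻¹.mulVec (((cols A Δ)ᵀ * projM A T).mulVec (fun i => A i ω)))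

/-- `δ` is a valid S-restricted isometry constant for `A`. -/
def RIP (A : Matrix (Fin n) (Fin m) ℝ) (S : ℕ) (δ : ℝ) : Prop :=
  0 ≤ δ ∧ ∀ (J : Finset (Fin m)), J.card ≤ S → ∀ x : Fin m → ℝ, suppOn x J →
    (1 - δ) * (∑ i, x i ^ 2) ≤ (∑ i, (A.mulVec x i) ^ 2) ∧
    (∑ i, (A.mulVec x i) ^ 2) ≤ (1 + δ) * (∑ i, x i ^ 2)

/-- `θ` is a valid (S,S')-restricted orthogonality constant for `A`. -/
def ROC (A : Matrix (Fin n) (Fin m) ℝ) (S S' : ℕ) (θ : ℝ) : Prop :=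
  0 ≤ θ ∧ ∀ (J J' : Finset (Fin m)), Disjoint J J' → J.card ≤ S → J'.card ≤ S' →
    ∀ x x' : Fin m → ℝ, suppOn x J → suppOn x' J' →
      |dotProduct (A.mulVec x) (A.mulVec x')| ≤ θ * l2v x * l2v x'

/-- `b` minimizes the modified-BPDN objective over vectors supported on `S`. -/
def IsRestrMin (A : Matrix (Fin n) (Fin m) ℝ) (y : Fin n → ℝ) (γ : ℝ)
    (T S : Finset (Fin m)) (b : Fin m → ℝ) : Prop :=
  suppOn b S ∧ ∀ b', suppOn b' S → objL A y γ T b ≤ objL A y γ T b'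

/-- `g` is a subgradient of `b ↦ ‖b_{Tᶜ}‖₁` at `b`. -/
def IsSubgrad (T : Finset (Fin m)) (b g : Fin m → ℝ) : Prop :=
  (∀ j, j ∈ T → g j = 0) ∧
  ∀ j, j ∉ T → |g j| ≤ 1 ∧ (b j ≠ 0 → g j = Real.sign (b j))

namespace Stmt10

variable {n m : ℕ}

/-! ### Basic norm facts -/

lemma abs_le_linfv {k : Type*} [Fintype k] (v : k → ℝ) (i : k) : |v i| ≤ linfv v :=
  le_ciSup (f := fun i => |v i|) (Set.finite_range _).bddAbove i

lemma linfv_nonneg {k : Type*} [Fintype k] (v : k → ℝ) : 0 ≤ linfv v := by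
  rcases isEmpty_or_nonempty k with h | h
  · simp [linfv, ciSup_of_empty]
  · exact le_trans (abs_nonneg _) (abs_le_linfv v (Classical.arbitrary k))

lemma linfv_le {k : Type*} [Fintype k] {v : k → ℝ} {a : ℝ} (ha : 0 ≤ a)
    (h : ∀ i, |v i| ≤ a) : linfv v ≤ a := Real.iSup_le h ha

lemma rowsum_le_matInf {k l : Type*} [Fintype k] [Fintype l] (B : Matrix k l ℝ) (i : k) :
    ∑ j, |B i j| ≤ matInf B :=
  le_ciSup (f := fun i => ∑ j, |B i j|) (Set.finite_range _).bddAbove i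

lemma matInf_nonneg {k l : Type*} [Fintype k] [Fintype l] (B : Matrix k l ℝ) : 0 ≤ matInf B := by
  rcases isEmpty_or_nonempty k with h | h
  · simp [matInf, ciSup_of_empty]
  · exact le_trans (Finset.sum_nonneg fun j _ => abs_nonneg _)
      (rowsum_le_matInf B (Classical.arbitrary k))

lemma abs_mulVec_le {k l : Type*} [Fintype k] [Fintype l] (B : Matrix k l ℝ) (v : l → ℝ)
    (i : k) : |B.mulVec v i| ≤ matInf B * linfv v := by
  calc |B.mulVec v i| = |∑ j, B i j * v j| := rfl
    _ ≤ ∑ j, |B i j * v j| := Finset.abs_sum_le_sum_abs _ _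
    _ ≤ ∑ j, |B i j| * linfv v := by
        refine Finset.sum_le_sum fun j _ => ?_
        rw [abs_mul]
        exact mul_le_mul_of_nonneg_left (abs_le_linfv v j) (abs_nonneg _)
    _ = (∑ j, |B i j|) * linfv v := by rw [Finset.sum_mul]
    _ ≤ matInf B * linfv v := mul_le_mul_of_nonneg_right (rowsum_le_matInf B i) (linfv_nonneg v)

lemma l1v_nonneg {k : Type*} [Fintype k] (v : k → ℝ) : 0 ≤ l1v v :=
  Finset.sum_nonneg fun _ _ => abs_nonneg _

lemma abs_dot_le_l1v {k : Type*} [Fintype k] (v g : k → ℝ) (hg : ∀ j, |g j| ≤ 1) :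
    |∑ j, v j * g j| ≤ l1v v := by
  calc |∑ j, v j * g j| ≤ ∑ j, |v j * g j| := Finset.abs_sum_le_sum_abs _ _
    _ ≤ ∑ j, |v j| := by
        refine Finset.sum_le_sum fun j _ => ?_
        rw [abs_mul]
        calc |v j| * |g j| ≤ |v j| * 1 := mul_le_mul_of_nonneg_left (hg j) (abs_nonneg _)
          _ = |v j| := mul_one _
    _ = l1v v := rfl

/-! ### Small real analysis lemmas -/

lemma le_zero_of_small {δ c d : ℝ} (hδ : 0 < δ) (h : ∀ ε, 0 < ε → ε ≤ δ → c ≤ ε * d) :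
    c ≤ 0 := by
  by_contra hc
  push_neg at hc
  rcases le_or_gt d 0 with hd | hd
  · have := h δ hδ le_rfl
    nlinarith
  · have hε : 0 < min δ (c / (2 * d)) := lt_min hδ (by positivity)
    have := h _ hε (min_le_left _ _)
    have h2 : min δ (c / (2 * d)) * d ≤ (c / (2 * d)) * d :=
      mul_le_mul_of_nonneg_right (min_le_right _ _) hd.le
    have h3 : (c / (2 * d)) * d = c / 2 := by field_simp
    nlinarith

lemma abs_add_small {a t : ℝ} (ha : a ≠ 0) (ht : |t| ≤ |a|) :
    |a + t| - |a| = Real.sign a * t := by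
  rcases lt_or_gt_of_ne ha with h | h
  · rw [Real.sign_of_neg h]
    rw [abs_le] at ht
    rw [abs_of_neg h, abs_of_nonpos (by cases abs_of_neg h ▸ ht; linarith)]
    ring
  · rw [Real.sign_of_pos h]
    rw [abs_le] at ht
    rw [abs_of_pos h, abs_of_nonneg (by cases abs_of_pos h ▸ ht; linarith)]
    ring

end Stmt10
namespace Stmt10

variable {n m : ℕ}

/-! ### Extension / gluing of vectors on index subsets -/

def ext (S : Finset (Fin m)) (u : {j // j ∈ S} → ℝ) : Fin m → ℝ :=
  fun j => if h : j ∈ S then u ⟨j, h⟩ else 0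

lemma ext_mem {S : Finset (Fin m)} (u : {j // j ∈ S} → ℝ) {j : Fin m} (h : j ∈ S) :
    ext S u j = u ⟨j, h⟩ := dif_pos h

lemma ext_not_mem {S : Finset (Fin m)} (u : {j // j ∈ S} → ℝ) {j : Fin m} (h : j ∉ S) :
    ext S u j = 0 := dif_neg h

lemma suppOn_ext {S : Finset (Fin m)} (u : {j // j ∈ S} → ℝ) : suppOn (ext S u) S :=
  fun _ h => dif_neg h

lemma ext_subv {S : Finset (Fin m)} {b : Fin m → ℝ} (hb : suppOn b S) :
    ext S (subv b S) = b := by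
  funext j
  by_cases h : j ∈ S
  · rw [ext_mem _ h]; rfl
  · rw [ext_not_mem _ h, hb j h]

lemma mulVec_ext (A : Matrix (Fin n) (Fin m) ℝ) (S : Finset (Fin m)) (u : {j // j ∈ S} → ℝ) :
    A.mulVec (ext S u) = (cols A S).mulVec u := by
  funext i
  show ∑ j, A i j * ext S u j = ∑ j : {j // j ∈ S}, cols A S i j * u j
  rw [Finset.univ_eq_attach]
  rw [← Finset.sum_subset (Finset.subset_univ S)
    (fun j _ hj => by rw [ext_not_mem u hj, mul_zero])]
  rw [← Finset.sum_attach S (fun j => A i j * ext S u j)]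
  refine Finset.sum_congr rfl fun j _ => ?_
  rw [ext_mem u j.2]
  rfl

/-- glue of a vector on T and a vector on Δ into a vector on T ∪ Δ -/
def glue (T Δ : Finset (Fin m)) (a : {j // j ∈ T} → ℝ) (b : {j // j ∈ Δ} → ℝ) :
    {j // j ∈ T ∪ Δ} → ℝ :=
  fun j => if h : j.1 ∈ T then a ⟨j.1, h⟩ else
    b ⟨j.1, (Finset.mem_union.1 j.2).resolve_left h⟩

lemma glue_left {T Δ : Finset (Fin m)} (a : {j // j ∈ T} → ℝ) (b : {j // j ∈ Δ} → ℝ)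
    {j : {j // j ∈ T ∪ Δ}} (h : j.1 ∈ T) : glue T Δ a b j = a ⟨j.1, h⟩ := dif_pos h

lemma glue_right {T Δ : Finset (Fin m)} (hd : Disjoint T Δ) (a : {j // j ∈ T} → ℝ)
    (b : {j // j ∈ Δ} → ℝ) {j : {j // j ∈ T ∪ Δ}} (h : j.1 ∈ Δ) :
    glue T Δ a b j = b ⟨j.1, h⟩ := by
  have hT : j.1 ∉ T := fun hT => (Finset.disjoint_left.1 hd) hT h
  simp only [glue, dif_neg hT]

lemma ext_glue {T Δ : Finset (Fin m)} (hd : Disjoint T Δ) (a : {j // j ∈ T} → ℝ)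
    (b : {j // j ∈ Δ} → ℝ) :
    ext (T ∪ Δ) (glue T Δ a b) = ext T a + ext Δ b := by
  funext j
  by_cases hT : j ∈ T
  · have hS : j ∈ T ∪ Δ := Finset.mem_union_left _ hT
    have hΔ : j ∉ Δ := fun h => (Finset.disjoint_left.1 hd) hT h
    rw [Pi.add_apply, ext_mem _ hS, ext_mem _ hT, ext_not_mem _ hΔ, glue_left _ _ hT, add_zero]
  · by_cases hΔ : j ∈ Δ
    · have hS : j ∈ T ∪ Δ := Finset.mem_union_right _ hΔ
      rw [Pi.add_apply, ext_mem _ hS, ext_mem _ hΔ, ext_not_mem _ hT,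
        glue_right hd _ _ hΔ, zero_add]
    · have hS : j ∉ T ∪ Δ := by simp [hT, hΔ]
      rw [Pi.add_apply, ext_not_mem _ hS, ext_not_mem _ hT, ext_not_mem _ hΔ, add_zero]

lemma mulVec_glue (A : Matrix (Fin n) (Fin m) ℝ) {T Δ : Finset (Fin m)} (hd : Disjoint T Δ)
    (a : {j // j ∈ T} → ℝ) (b : {j // j ∈ Δ} → ℝ) :
    (cols A (T ∪ Δ)).mulVec (glue T Δ a b) =
      (cols A T).mulVec a + (cols A Δ).mulVec b := by
  rw [← mulVec_ext, ext_glue hd, Matrix.mulVec_add, mulVec_ext, mulVec_ext]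

/-- Transposed submatrix applied to a vector, entrywise. -/
lemma colsT_mulVec (A : Matrix (Fin n) (Fin m) ℝ) (S : Finset (Fin m)) (v : Fin n → ℝ)
    (j : {j // j ∈ S}) : (cols A S)ᵀ.mulVec v j = ∑ i, A i j.1 * v i := by
  show ∑ i, (cols A S)ᵀ j i * v i = _
  rfl

lemma colsT_mulVec_agree (A : Matrix (Fin n) (Fin m) ℝ) (S S' : Finset (Fin m)) (v : Fin n → ℝ)
    {j : Fin m} (h : j ∈ S) (h' : j ∈ S') :
    (cols A S)ᵀ.mulVec v ⟨j, h⟩ = (cols A S')ᵀ.mulVec v ⟨j, h'⟩ := by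
  rw [colsT_mulVec, colsT_mulVec]

end Stmt10
namespace Stmt10

variable {n m : ℕ}

/-- The abstract objective on coefficient space. -/
def Fobj {ι : Type*} [Fintype ι] (B : Matrix (Fin n) ι ℝ) (y : Fin n → ℝ) (γ : ℝ)
    (pen : ι → ℝ) (u : ι → ℝ) : ℝ :=
  (1/2) * (∑ i, (y i - B.mulVec u i) ^ 2) + γ * ∑ j, pen j * |u j|

lemma posdef_aux {ι : Type*} [Fintype ι] [DecidableEq ι] (B : Matrix (Fin n) ι ℝ)
    (hB : ∀ u : ι → ℝ, B.mulVec u = 0 → u = 0) :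
    ∃ c > 0, ∀ u : ι → ℝ, c * ∑ j, u j ^ 2 ≤ ∑ i, B.mulVec u i ^ 2 := by
  rcases isEmpty_or_nonempty ι with hι | hι
  · refine ⟨1, one_pos, fun u => ?_⟩
    have h1 : ∑ j, u j ^ 2 = 0 := by simp
    rw [h1, mul_zero]
    exact Finset.sum_nonneg fun i _ => sq_nonneg _
  · -- compact sphere argument
    set Sph : Set (ι → ℝ) := {u | ∑ j, u j ^ 2 = 1} with hSph
    have hcont : Continuous fun u : ι → ℝ => ∑ j, u j ^ 2 :=
      continuous_finset_sum _ fun j _ => (continuous_apply j).pow 2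
    have hq : Continuous fun u : ι → ℝ => ∑ i, B.mulVec u i ^ 2 := by
      apply continuous_finset_sum
      intro i _
      have : Continuous fun u : ι → ℝ => B.mulVec u i :=
        continuous_finset_sum _ fun j _ => continuous_const.mul (continuous_apply j)
      exact this.pow 2
    have hclosed : IsClosed Sph := isClosed_eq hcont continuous_const
    have hbdd : Bornology.IsBounded Sph := by
      apply Bornology.IsBounded.subset (Metric.isBounded_closedBall (x := (0 : ι → ℝ)) (r := 1))
      intro u hu
      simp only [Metric.mem_closedBall, dist_zero_right]
      rw [pi_norm_le_iff_of_nonneg zero_le_one]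
      intro j
      rw [Real.norm_eq_abs, ← sq_le_one_iff_abs_le_one]
      calc u j ^ 2 ≤ ∑ k, u k ^ 2 :=
            Finset.single_le_sum (fun k _ => sq_nonneg (u k)) (Finset.mem_univ j)
        _ = 1 := hu
    have hcomp : IsCompact Sph := Metric.isCompact_of_isClosed_isBounded hclosed hbdd
    have hne : Sph.Nonempty := by
      obtain ⟨j0⟩ := hι
      refine ⟨Pi.single j0 1, ?_⟩
      simp only [hSph, Set.mem_setOf_eq]
      rw [Finset.sum_eq_single j0]
      · simp
      · intro k _ hk; simp [Pi.single_eq_of_ne hk]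
      · intro h; exact absurd (Finset.mem_univ j0) h
    obtain ⟨u0, hu0S, hu0min⟩ := hcomp.exists_isMinOn hne hq.continuousOn
    set c := ∑ i, B.mulVec u0 i ^ 2 with hc
    have hcpos : 0 < c := by
      rcases (Finset.sum_nonneg fun i (_ : i ∈ Finset.univ) =>
        sq_nonneg (B.mulVec u0 i)).lt_or_eq with h | h
      · exact h
      · exfalso
        have hz : B.mulVec u0 = 0 := by
          funext i
          have := (Finset.sum_eq_zero_iff_of_nonneg
            (fun i (_ : i ∈ Finset.univ) => sq_nonneg (B.mulVec u0 i))).1 h.symm i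
            (Finset.mem_univ i)
          exact pow_eq_zero_iff two_ne_zero |>.1 this
        have : u0 = 0 := hB u0 hz
        rw [this] at hu0S
        simp [hSph] at hu0S
    refine ⟨c, hcpos, fun u => ?_⟩
    by_cases hs : ∑ j, u j ^ 2 = 0
    · have hu0' : u = 0 := by
        funext j
        have := (Finset.sum_eq_zero_iff_of_nonneg
          (fun j (_ : j ∈ Finset.univ) => sq_nonneg (u j))).1 hs j (Finset.mem_univ j)
        exact pow_eq_zero_iff two_ne_zero |>.1 this
      rw [hu0']
      simp
    · have hspos : 0 < ∑ j, u j ^ 2 :=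
        (Finset.sum_nonneg fun j _ => sq_nonneg (u j)).lt_of_ne (Ne.symm hs)
      set t := Real.sqrt (∑ j, u j ^ 2) with ht
      have htpos : 0 < t := Real.sqrt_pos.2 hspos
      have ht2 : t ^ 2 = ∑ j, u j ^ 2 := Real.sq_sqrt hspos.le
      have hv : (t⁻¹ • u) ∈ Sph := by
        simp only [hSph, Set.mem_setOf_eq, Pi.smul_apply, smul_eq_mul]
        have : ∑ j, (t⁻¹ * u j) ^ 2 = t⁻¹ ^ 2 * ∑ j, u j ^ 2 := by
          rw [Finset.mul_sum]; exact Finset.sum_congr rfl fun j _ => by ring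
        rw [this, ← ht2]
        have htne : t ≠ 0 := htpos.ne'
        field_simp
      have hmin := hu0min hv
      have hqv : ∑ i, B.mulVec (t⁻¹ • u) i ^ 2 = t⁻¹ ^ 2 * ∑ i, B.mulVec u i ^ 2 := by
        rw [Matrix.mulVec_smul, Finset.mul_sum]
        exact Finset.sum_congr rfl fun i _ => by simp [smul_eq_mul]; ring
      simp only [Set.mem_setOf_eq] at hmin
      rw [hqv] at hmin
      -- hmin : c ≤ t⁻¹ ^ 2 * ∑ i, B.mulVec u i ^ 2
      have := mul_le_mul_of_nonneg_left hmin (le_of_lt (by positivity : (0:ℝ) < t ^ 2))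
      calc c * ∑ j, u j ^ 2 = t ^ 2 * c := by rw [ht2]; ring
        _ ≤ t ^ 2 * (t⁻¹ ^ 2 * ∑ i, B.mulVec u i ^ 2) := this
        _ = ∑ i, B.mulVec u i ^ 2 := by
            have htne : t ≠ 0 := htpos.ne'
            field_simp
  
lemma exists_min_aux {ι : Type*} [Fintype ι] [DecidableEq ι] (B : Matrix (Fin n) ι ℝ)
    (hB : ∀ u : ι → ℝ, B.mulVec u = 0 → u = 0) (y : Fin n → ℝ) (γ : ℝ) (hγ : 0 ≤ γ)
    (pen : ι → ℝ) (hpen : ∀ j, 0 ≤ pen j) :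
    ∃ u : ι → ℝ, ∀ u', Fobj B y γ pen u ≤ Fobj B y γ pen u' := by
  obtain ⟨c, hcpos, hc⟩ := posdef_aux B hB
  have hFcont : Continuous (Fobj B y γ pen) := by
    apply Continuous.add
    · apply continuous_const.mul
      apply continuous_finset_sum
      intro i _
      exact (continuous_const.sub
        (continuous_finset_sum _ fun j _ => continuous_const.mul (continuous_apply j))).pow 2
    · apply continuous_const.mul
      exact continuous_finset_sum _ fun j _ =>
        continuous_const.mul ((continuous_apply j).abs)
  have hFnonneg : ∀ u, 0 ≤ Fobj B y γ pen u := by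
    intro u
    apply add_nonneg
    · exact mul_nonneg (by norm_num) (Finset.sum_nonneg fun i _ => sq_nonneg _)
    · exact mul_nonneg hγ (Finset.sum_nonneg fun j _ =>
        mul_nonneg (hpen j) (abs_nonneg _))
  -- coercivity bound: on the sublevel set, ∑ u² is bounded
  have hkey : ∀ u : ι → ℝ, Fobj B y γ pen u ≤ Fobj B y γ pen 0 →
      ∑ j, u j ^ 2 ≤ (4 * Fobj B y γ pen 0 + 2 * ∑ i, y i ^ 2) / c := by
    intro u hu
    have h1 : ∀ i, B.mulVec u i ^ 2 / 2 - y i ^ 2 ≤ (y i - B.mulVec u i) ^ 2 := by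
      intro i; nlinarith [sq_nonneg (B.mulVec u i / 2 - y i), sq_nonneg (B.mulVec u i - 2 * y i)]
    have h2 : (∑ i, B.mulVec u i ^ 2) / 2 - ∑ i, y i ^ 2 ≤ ∑ i, (y i - B.mulVec u i) ^ 2 := by
      have h := Finset.sum_le_sum fun i (_ : i ∈ Finset.univ) => h1 i
      rw [Finset.sum_sub_distrib] at h
      rw [Finset.sum_div]
      exact h
    have h3 : (1/2) * ∑ i, (y i - B.mulVec u i) ^ 2 ≤ Fobj B y γ pen u := by
      unfold Fobj
      have : 0 ≤ γ * ∑ j, pen j * |u j| := mul_nonneg hγ (Finset.sum_nonneg fun j _ =>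
        mul_nonneg (hpen j) (abs_nonneg _))
      linarith
    have h4 : c * ∑ j, u j ^ 2 ≤ ∑ i, B.mulVec u i ^ 2 := hc u
    rw [le_div_iff₀ hcpos]
    nlinarith [hFnonneg u, hu, h2, h3]
  set D := (4 * Fobj B y γ pen 0 + 2 * ∑ i, y i ^ 2) / c with hD
  have hDnonneg : 0 ≤ D := by
    apply div_nonneg _ hcpos.le
    have := hFnonneg 0
    have h5 : 0 ≤ ∑ i, y i ^ 2 := Finset.sum_nonneg fun i _ => sq_nonneg _
    linarith
  set K : Set (ι → ℝ) := {u | Fobj B y γ pen u ≤ Fobj B y γ pen 0} with hK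
  have hKclosed : IsClosed K := isClosed_le hFcont continuous_const
  have hKbdd : Bornology.IsBounded K := by
    apply Bornology.IsBounded.subset
      (Metric.isBounded_closedBall (x := (0 : ι → ℝ)) (r := Real.sqrt D))
    intro u hu
    simp only [Metric.mem_closedBall, dist_zero_right]
    rw [pi_norm_le_iff_of_nonneg (Real.sqrt_nonneg D)]
    intro j
    rw [Real.norm_eq_abs]
    apply Real.abs_le_sqrt
    calc u j ^ 2 ≤ ∑ k, u k ^ 2 :=
          Finset.single_le_sum (fun k _ => sq_nonneg (u k)) (Finset.mem_univ j)
      _ ≤ D := hkey u hu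
  have hKcomp : IsCompact K := Metric.isCompact_of_isClosed_isBounded hKclosed hKbdd
  have hKne : K.Nonempty := ⟨0, show Fobj B y γ pen 0 ≤ _ from le_rfl⟩
  obtain ⟨u, huK, humin⟩ := hKcomp.exists_isMinOn hKne hFcont.continuousOn
  refine ⟨u, fun u' => ?_⟩
  by_cases hu' : u' ∈ K
  · exact humin hu'
  · simp only [hK, Set.mem_setOf_eq, not_le] at hu'
    have h0 : (0 : ι → ℝ) ∈ K := show Fobj B y γ pen 0 ≤ _ from le_rfl
    exact le_trans (humin h0) hu'.le

end Stmt10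
namespace Stmt10

variable {n m : ℕ}

lemma kkt {ι : Type*} [Fintype ι] [DecidableEq ι] (B : Matrix (Fin n) ι ℝ) (y : Fin n → ℝ)
    (γ : ℝ) (hγ : 0 < γ) (pen : ι → ℝ) (u : ι → ℝ)
    (hu : ∀ u', Fobj B y γ pen u ≤ Fobj B y γ pen u') (j : ι) :
    (pen j = 0 → Bᵀ.mulVec (B.mulVec u - y) j = 0) ∧
    (pen j = 1 → |Bᵀ.mulVec (B.mulVec u - y) j| ≤ γ ∧
      (u j ≠ 0 → Bᵀ.mulVec (B.mulVec u - y) j = -γ * Real.sign (u j))) := by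
  have e : ι → ℝ := Pi.single j 1
  set G := Bᵀ.mulVec (B.mulVec u - y) j with hGdef
  set H := ∑ i, B i j ^ 2 with hHdef
  have hH : 0 ≤ H := Finset.sum_nonneg fun i _ => sq_nonneg _
  have hGeq : G = ∑ i, B i j * (B.mulVec u i - y i) := by
    rw [hGdef]
    rfl
  have hq : ∀ t : ℝ, ∑ i, (y i - B.mulVec (u + t • (Pi.single j 1 : ι → ℝ)) i) ^ 2 =
      (∑ i, (y i - B.mulVec u i) ^ 2) + 2 * t * G + t ^ 2 * H := by
    intro t
    have h1 : ∀ i, B.mulVec (u + t • (Pi.single j 1 : ι → ℝ)) i = B.mulVec u i + t * B i j := by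
      intro i
      rw [Matrix.mulVec_add, Matrix.mulVec_smul, Matrix.mulVec_single]
      simp [mul_comm]
    have h2 : ∀ i, (y i - B.mulVec (u + t • (Pi.single j 1 : ι → ℝ)) i) ^ 2 =
        (y i - B.mulVec u i) ^ 2 + 2 * t * (B i j * (B.mulVec u i - y i)) +
          t ^ 2 * B i j ^ 2 := by
      intro i; rw [h1 i]; ring
    rw [Finset.sum_congr rfl fun i _ => h2 i]
    rw [Finset.sum_add_distrib, Finset.sum_add_distrib, ← Finset.mul_sum, ← Finset.mul_sum,
      ← hGeq]
  have hp : ∀ t : ℝ, ∑ k, pen k * |(u + t • (Pi.single j 1 : ι → ℝ)) k| =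
      (∑ k, pen k * |u k|) + pen j * (|u j + t| - |u j|) := by
    intro t
    rw [Finset.sum_eq_sum_sdiff_singleton_add (Finset.mem_univ j)
      (fun k => pen k * |(u + t • (Pi.single j 1 : ι → ℝ)) k|),
      Finset.sum_eq_sum_sdiff_singleton_add (Finset.mem_univ j) (fun k => pen k * |u k|)]
    have hjj : (u + t • (Pi.single j 1 : ι → ℝ)) j = u j + t := by simp
    have hoff : ∀ k ∈ Finset.univ \ {j}, pen k * |(u + t • (Pi.single j 1 : ι → ℝ)) k| =
        pen k * |u k| := by
      intro k hk
      have hkj : k ≠ j := by simp only [Finset.mem_sdiff, Finset.mem_singleton] at hk; exact hk.2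
      simp [Pi.single_eq_of_ne hkj]
    rw [Finset.sum_congr rfl hoff, hjj]
    ring
  have key : ∀ t : ℝ, 0 ≤ t * G + t ^ 2 / 2 * H + γ * (pen j * (|u j + t| - |u j|)) := by
    intro t
    have h0 := hu (u + t • (Pi.single j 1 : ι → ℝ))
    unfold Fobj at h0
    rw [hq t, hp t, mul_add γ] at h0
    nlinarith [h0]
  constructor
  · intro hpen0
    have key' : ∀ t : ℝ, 0 ≤ t * G + t ^ 2 / 2 * H := by
      intro t; have := key t; rw [hpen0] at this; linarith
    have h1 : G ≤ 0 := by
      apply le_zero_of_small one_pos (d := H / 2)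
      intro ε hε _
      nlinarith [key' (-ε)]
    have h2 : -G ≤ 0 := by
      apply le_zero_of_small one_pos (d := H / 2)
      intro ε hε _
      nlinarith [key' ε]
    linarith
  · intro hpen1
    by_cases huj : u j = 0
    · have key' : ∀ t : ℝ, 0 ≤ t * G + t ^ 2 / 2 * H + γ * |t| := by
        intro t; have := key t; rw [hpen1, huj] at this
        simp only [zero_add, abs_zero, sub_zero, one_mul] at this
        linarith
      have h1 : G - γ ≤ 0 := by
        apply le_zero_of_small one_pos (d := H / 2)
        intro ε hε _
        have k := key' (-ε)
        rw [abs_neg, abs_of_pos hε] at k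
        nlinarith
      have h2 : -G - γ ≤ 0 := by
        apply le_zero_of_small one_pos (d := H / 2)
        intro ε hε _
        have k := key' ε
        rw [abs_of_pos hε] at k
        nlinarith
      exact ⟨abs_le.2 ⟨by linarith, by linarith⟩, fun h => absurd huj h⟩
    · set s := Real.sign (u j) with hsdef
      have hδ : 0 < |u j| := abs_pos.2 huj
      have key' : ∀ t : ℝ, |t| ≤ |u j| → 0 ≤ t * (G + γ * s) + t ^ 2 / 2 * H := by
        intro t ht
        have := key t
        rw [hpen1, one_mul, abs_add_small huj ht] at this
        linarith [this]
      have h1 : G + γ * s ≤ 0 := by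
        apply le_zero_of_small hδ (d := H / 2)
        intro ε hε hεδ
        have k := key' (-ε) (by rw [abs_neg, abs_of_pos hε]; exact hεδ)
        nlinarith
      have h2 : -(G + γ * s) ≤ 0 := by
        apply le_zero_of_small hδ (d := H / 2)
        intro ε hε hεδ
        have k := key' ε (by rw [abs_of_pos hε]; exact hεδ)
        nlinarith
      have hGs : G = -γ * s := by linarith
      have habs : |s| = 1 := by
        rcases lt_or_gt_of_ne huj with h | h
        · rw [hsdef, Real.sign_of_neg h]; norm_num
        · rw [hsdef, Real.sign_of_pos h]; norm_num
      refine ⟨?_, fun _ => hGs⟩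
      rw [hGs, abs_mul, abs_neg, abs_of_pos hγ, habs, mul_one]

end Stmt10
namespace Stmt10

variable {n m : ℕ}

lemma gram_unit_det {ι : Type*} [Fintype ι] [DecidableEq ι] (C : Matrix (Fin n) ι ℝ)
    (hinj : ∀ v : ι → ℝ, C.mulVec v = 0 → v = 0) : IsUnit (Cᵀ * C).det := by
  rw [isUnit_iff_ne_zero]
  intro hdet
  obtain ⟨v, hv0, hv⟩ := Matrix.exists_mulVec_eq_zero_iff.2 hdet
  apply hv0
  apply hinj
  have h1 : dotProduct v ((Cᵀ * C).mulVec v) = 0 := by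
    rw [hv, dotProduct_zero]
  rw [← Matrix.mulVec_mulVec, dotProduct_mulVec, Matrix.vecMul_transpose] at h1
  funext i
  have h2 := (Finset.sum_eq_zero_iff_of_nonneg
    (fun i (_ : i ∈ Finset.univ) => mul_self_nonneg (C.mulVec v i))).1 h1 i (Finset.mem_univ i)
  exact mul_self_eq_zero.1 h2

lemma sum_compl_eq (T : Finset (Fin m)) (f : Fin m → ℝ) :
    ∑ j ∈ Tᶜ, f j = ∑ j, (if j ∈ T then 0 else f j) := by
  rw [← Finset.sum_subset (Finset.subset_univ Tᶜ)
    (fun j _ hj => by rw [if_pos (by simpa using hj)])]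
  exact Finset.sum_congr rfl fun j hj => (if_neg (Finset.mem_compl.1 hj)).symm

lemma objL_ext (A : Matrix (Fin n) (Fin m) ℝ) (y : Fin n → ℝ) (γ : ℝ) (T S : Finset (Fin m))
    (u : {j // j ∈ S} → ℝ) :
    objL A y γ T (ext S u) =
      Fobj (cols A S) y γ (fun j => if j.1 ∈ T then 0 else 1) u := by
  unfold objL Fobj l1c
  rw [mulVec_ext]
  congr 1
  congr 1
  rw [sum_compl_eq]
  have h1 : ∑ j : {j // j ∈ S}, (if j.1 ∈ T then (0:ℝ) else 1) * |u j| =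
      ∑ j ∈ S, (if j ∈ T then (0:ℝ) else |ext S u j|) := by
    rw [Finset.univ_eq_attach,
      ← Finset.sum_attach S (fun j => if j ∈ T then (0:ℝ) else |ext S u j|)]
    refine Finset.sum_congr rfl fun j _ => ?_
    rw [ext_mem u j.2]
    by_cases h : j.1 ∈ T
    · rw [if_pos h, if_pos h, zero_mul]
    · rw [if_neg h, if_neg h, one_mul]
  rw [h1]
  symm
  apply Finset.sum_subset (Finset.subset_univ S)
  intro j _ hj
  rw [ext_not_mem u hj]
  by_cases h : j ∈ T
  · rw [if_pos h]
  · rw [if_neg h, abs_zero]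

lemma sign_mul_self {a : ℝ} (ha : a ≠ 0) : Real.sign a * a = |a| := by
  rcases lt_or_gt_of_ne ha with h | h
  · rw [Real.sign_of_neg h, abs_of_neg h]; ring
  · rw [Real.sign_of_pos h, abs_of_pos h]; ring

lemma sign_mul_le_abs (a b : ℝ) : Real.sign a * b ≤ |b| := by
  rcases lt_trichotomy a 0 with h | h | h
  · rw [Real.sign_of_neg h]; rw [neg_one_mul]; exact neg_le_abs b
  · rw [h, Real.sign_zero, zero_mul]; exact abs_nonneg b
  · rw [Real.sign_of_pos h, one_mul]; exact le_abs_self b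

end Stmt10
open Stmt10 in
set_option maxHeartbeats 2000000 in
/-- modified-BPDN theorem, ℓ∞ bound for the unique global minimizer. -/
theorem stmt10 (n m : ℕ) (A : Matrix (Fin n) (Fin m) ℝ) (T Δ N : Finset (Fin m))
    (hdisj : Disjoint T Δ) (hNNe : N ⊆ T ∪ Δ)
    (hrank : IsUnit ((cols A (T ∪ Δ))ᵀ * cols A (T ∪ Δ)))
    (γ : ℝ) (hγ : 0 < γ) (x : Fin m → ℝ) (hx : suppOn x N)
    (wn : Fin n → ℝ) (y : Fin n → ℝ) (hy : y = A.mulVec x + wn)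
    (hcond : ∀ ω, ω ∉ T ∪ Δ →
      linfv (Aᵀ.mulVec (y - (cols A (T ∪ Δ)).mulVec (lsq A (T ∪ Δ) y))) <
        γ * (1 - erc A T Δ ω)) :
    ∃ btil : Fin m → ℝ,
      (∀ b, objL A y γ T btil ≤ objL A y γ T b) ∧
      (∀ b, (∀ b', objL A y γ T b ≤ objL A y γ T b') → b = btil) ∧
      suppOn btil (T ∪ Δ) ∧
      linfv (btil - x) ≤
        γ * max (matInf (crossMat A T Δ)) (matInf ((schur A T Δ)⁻¹)) +
          matInf (((cols A (T ∪ Δ))ᵀ * cols A (T ∪ Δ))⁻¹ * (cols A (T ∪ Δ))ᵀ) *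
            linfv wn := by
  classical
  set S : Finset (Fin m) := T ∪ Δ with hSdef
  set B : Matrix (Fin n) {j // j ∈ S} ℝ := cols A S with hBdef
  set P : Matrix {j // j ∈ S} {j // j ∈ S} ℝ := Bᵀ * B with hPdef
  have hdet : IsUnit P.det := (Matrix.isUnit_iff_isUnit_det P).1 hrank
  have hcancel : ∀ u : {j // j ∈ S} → ℝ, P⁻¹.mulVec (P.mulVec u) = u := by
    intro u
    rw [Matrix.mulVec_mulVec, Matrix.nonsing_inv_mul _ hdet, Matrix.one_mulVec]
  have hBinj : ∀ u : {j // j ∈ S} → ℝ, B.mulVec u = 0 → u = 0 := by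
    intro u h
    have h2 : P.mulVec u = 0 := by
      rw [hPdef, ← Matrix.mulVec_mulVec, h, Matrix.mulVec_zero]
    rw [← hcancel u, h2, Matrix.mulVec_zero]
  -- the penalty pattern
  set pen : {j // j ∈ S} → ℝ := fun j => if j.1 ∈ T then 0 else 1 with hpendef
  have hpen0 : ∀ j, 0 ≤ pen j := fun j => by by_cases h : j.1 ∈ T <;> simp [hpendef, h]
  -- restricted minimizer
  obtain ⟨u0, hu0⟩ := exists_min_aux B hBinj y γ hγ.le pen hpen0
  set btil : Fin m → ℝ := ext S u0 with hbtil
  have hsupp : suppOn btil S := suppOn_ext u0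
  -- gradient of the quadratic part
  set R : Fin m → ℝ := Aᵀ.mulVec (A.mulVec btil - y) with hRdef
  have hABu : A.mulVec btil = B.mulVec u0 := by rw [hbtil, mulVec_ext]
  have hR_eq : ∀ j : {j // j ∈ S}, Bᵀ.mulVec (B.mulVec u0 - y) j = R j.1 := by
    intro j
    rw [← hABu, hRdef]
    rfl
  -- KKT conditions
  have hKT : ∀ j : {j // j ∈ S}, j.1 ∈ T → R j.1 = 0 := by
    intro j hj
    have := (kkt B y γ hγ pen u0 hu0 j).1 (by simp [hpendef, hj])
    rwa [hR_eq j] at this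
  have hKTc1 : ∀ j : {j // j ∈ S}, j.1 ∉ T → |R j.1| ≤ γ := by
    intro j hj
    have := ((kkt B y γ hγ pen u0 hu0 j).2 (by simp [hpendef, hj])).1
    rwa [hR_eq j] at this
  have hKTc2 : ∀ j : {j // j ∈ S}, j.1 ∉ T → u0 j ≠ 0 →
      R j.1 = -γ * Real.sign (u0 j) := by
    intro j hj hne
    have := ((kkt B y γ hγ pen u0 hu0 j).2 (by simp [hpendef, hj])).2 hne
    rwa [hR_eq j] at this
  -- subgradient vector
  set g : {j // j ∈ S} → ℝ := fun j => if j.1 ∈ T then 0 else -(R j.1) / γ with hgdef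
  have hg1 : ∀ j, |g j| ≤ 1 := by
    intro j
    by_cases h : j.1 ∈ T
    · simp [hgdef, h]
    · simp only [hgdef, if_neg h]
      rw [abs_div, abs_neg, abs_of_pos hγ, div_le_one hγ]
      exact hKTc1 j h
  have hstat : P.mulVec u0 = Bᵀ.mulVec y - γ • g := by
    funext j
    have h1 : Bᵀ.mulVec (B.mulVec u0 - y) j = Bᵀ.mulVec (B.mulVec u0) j - Bᵀ.mulVec y j := by
      rw [Matrix.mulVec_sub]; rfl
    have h2 : P.mulVec u0 j = Bᵀ.mulVec (B.mulVec u0) j := by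
      rw [hPdef, ← Matrix.mulVec_mulVec]
    have h3 : R j.1 = -(γ * g j) := by
      by_cases h : j.1 ∈ T
      · rw [hKT j h, hgdef]; simp [h]
      · simp only [hgdef, if_neg h]
        field_simp
    have := hR_eq j
    rw [h1] at this
    rw [Pi.sub_apply, Pi.smul_apply, smul_eq_mul, h2]
    linarith [this, h3]
  -- invertibility of the T-Gram matrix
  have hTinj : ∀ v : {j // j ∈ T} → ℝ, (cols A T).mulVec v = 0 → v = 0 := by
    intro v hv
    have hglue : B.mulVec (glue T Δ v 0) = 0 := by
      rw [hBdef, mulVec_glue A hdisj, hv, Matrix.mulVec_zero, add_zero]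
    have h0 := hBinj _ hglue
    funext j
    have h1 : glue T Δ v 0 ⟨j.1, Finset.mem_union_left _ j.2⟩ = v j := by
      rw [glue_left v 0 (j := ⟨j.1, Finset.mem_union_left _ j.2⟩) j.2]
    rw [← h1, h0]
    rfl
  have hdetT : IsUnit ((cols A T)ᵀ * cols A T).det := gram_unit_det _ hTinj
  have hPttsymm : ((cols A T)ᵀ * cols A T)ᵀ = (cols A T)ᵀ * cols A T := by
    rw [Matrix.transpose_mul, Matrix.transpose_transpose]
  have hMsymm : (projM A T)ᵀ = projM A T := by
    unfold projM
    rw [Matrix.transpose_sub, Matrix.transpose_one, Matrix.transpose_mul, Matrix.transpose_mul,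
      Matrix.transpose_transpose, Matrix.transpose_nonsing_inv, hPttsymm, Matrix.mul_assoc]
  have hMM : projM A T * projM A T = projM A T := by
    unfold projM
    have h1 : ((cols A T)ᵀ * cols A T)⁻¹ * ((cols A T)ᵀ * cols A T) = 1 :=
      Matrix.nonsing_inv_mul _ hdetT
    have hKK : cols A T * ((cols A T)ᵀ * cols A T)⁻¹ * (cols A T)ᵀ *
        (cols A T * ((cols A T)ᵀ * cols A T)⁻¹ * (cols A T)ᵀ) =
        cols A T * ((cols A T)ᵀ * cols A T)⁻¹ * (cols A T)ᵀ := by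
      calc cols A T * ((cols A T)ᵀ * cols A T)⁻¹ * (cols A T)ᵀ *
          (cols A T * ((cols A T)ᵀ * cols A T)⁻¹ * (cols A T)ᵀ)
          = cols A T * (((cols A T)ᵀ * cols A T)⁻¹ * ((cols A T)ᵀ * cols A T) *
              (((cols A T)ᵀ * cols A T)⁻¹ * (cols A T)ᵀ)) := by
            simp only [Matrix.mul_assoc]
        _ = _ := by rw [h1, Matrix.one_mul, Matrix.mul_assoc]
    set K := cols A T * ((cols A T)ᵀ * cols A T)⁻¹ * (cols A T)ᵀ
    calc (1 - K) * (1 - K) = 1 - K - K + K * K := by noncomm_ring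
      _ = 1 - K := by rw [hKK]; noncomm_ring
  -- invertibility of the Schur complement
  have hCinj : ∀ v : {j // j ∈ Δ} → ℝ, (projM A T * cols A Δ).mulVec v = 0 → v = 0 := by
    intro v hv
    rw [← Matrix.mulVec_mulVec] at hv
    obtain ⟨z, hzdef⟩ : ∃ z, (cols A Δ).mulVec v = z := ⟨_, rfl⟩
    rw [hzdef] at hv
    obtain ⟨t, htdef⟩ : ∃ t, ((((cols A T)ᵀ * cols A T)⁻¹) * (cols A T)ᵀ).mulVec z = t :=
      ⟨_, rfl⟩
    have h1 : (projM A T).mulVec z = z - (cols A T).mulVec t := by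
      rw [← htdef, Matrix.mulVec_mulVec, ← Matrix.mul_assoc]
      show (1 - cols A T * ((cols A T)ᵀ * cols A T)⁻¹ * (cols A T)ᵀ).mulVec z = _
      rw [Matrix.sub_mulVec, Matrix.one_mulVec]
    rw [hv] at h1
    have hz : z = (cols A T).mulVec t := sub_eq_zero.1 h1.symm
    have hglue : B.mulVec (glue T Δ (-t) v) = 0 := by
      rw [hBdef, mulVec_glue A hdisj, Matrix.mulVec_neg, hzdef, hz, neg_add_cancel]
    have h0 := hBinj _ hglue
    funext j
    have h2 : glue T Δ (-t) v ⟨j.1, Finset.mem_union_right _ j.2⟩ = v j := by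
      rw [glue_right hdisj (-t) v (j := ⟨j.1, Finset.mem_union_right _ j.2⟩) j.2]
    rw [← h2, h0]
    rfl
  have hQMM : (cols A Δ)ᵀ * projM A T * (projM A T * cols A Δ) =
      (cols A Δ)ᵀ * projM A T * cols A Δ := by
    calc (cols A Δ)ᵀ * projM A T * (projM A T * cols A Δ)
        = (cols A Δ)ᵀ * (projM A T * projM A T) * cols A Δ := by
          simp only [Matrix.mul_assoc]
      _ = _ := by rw [hMM]
  have hQeq : schur A T Δ = (projM A T * cols A Δ)ᵀ * (projM A T * cols A Δ) := by
    show (cols A Δ)ᵀ * projM A T * cols A Δ =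
      (projM A T * cols A Δ)ᵀ * (projM A T * cols A Δ)
    rw [Matrix.transpose_mul, hMsymm]
    exact hQMM.symm
  have hdetQ : IsUnit (schur A T Δ).det := by
    rw [hQeq]; exact gram_unit_det _ hCinj
  have hQsymm : (schur A T Δ)ᵀ = schur A T Δ := by
    show ((cols A Δ)ᵀ * projM A T * cols A Δ)ᵀ = (cols A Δ)ᵀ * projM A T * cols A Δ
    rw [Matrix.transpose_mul, Matrix.transpose_mul, hMsymm, Matrix.transpose_transpose,
      Matrix.mul_assoc]
  have hQexp : schur A T Δ = (cols A Δ)ᵀ * cols A Δ -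
      ((cols A Δ)ᵀ * cols A T) *
        ((((cols A T)ᵀ * cols A T)⁻¹) * ((cols A T)ᵀ * cols A Δ)) := by
    show (cols A Δ)ᵀ * (1 - cols A T * ((cols A T)ᵀ * cols A T)⁻¹ * (cols A T)ᵀ) * cols A Δ =
      (cols A Δ)ᵀ * cols A Δ - ((cols A Δ)ᵀ * cols A T) *
        ((((cols A T)ᵀ * cols A T)⁻¹) * ((cols A T)ᵀ * cols A Δ))
    rw [Matrix.mul_sub, Matrix.mul_one, Matrix.sub_mul]
    congr 1
    simp only [Matrix.mul_assoc]
  -- the explicit correction vector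
  set gΔ : {j // j ∈ Δ} → ℝ := fun j => g ⟨j.1, Finset.mem_union_right _ j.2⟩ with hgΔdef
  set aT : {j // j ∈ T} → ℝ := -(crossMat A T Δ).mulVec gΔ with haTdef
  set bΔ : {j // j ∈ Δ} → ℝ := (schur A T Δ)⁻¹.mulVec gΔ with hbΔdef
  set hvec := glue T Δ aT bΔ with hhdef
  have hGlueMul : B.mulVec hvec = (cols A T).mulVec aT + (cols A Δ).mulVec bΔ :=
    mulVec_glue A hdisj aT bΔ
  have hPh : P.mulVec hvec = g := by
    funext j
    have hPj : P.mulVec hvec j = Bᵀ.mulVec (B.mulVec hvec) j := by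
      rw [hPdef, ← Matrix.mulVec_mulVec]
    rcases Finset.mem_union.1 j.2 with hT | hΔ
    · have he : Bᵀ.mulVec (B.mulVec hvec) j =
          (cols A T)ᵀ.mulVec (B.mulVec hvec) ⟨j.1, hT⟩ :=
        colsT_mulVec_agree A S T _ j.2 hT
      have hc1 : (cols A T)ᵀ.mulVec (B.mulVec hvec) =
          ((cols A T)ᵀ * cols A T).mulVec aT + ((cols A T)ᵀ * cols A Δ).mulVec bΔ := by
        rw [hGlueMul, Matrix.mulVec_add, Matrix.mulVec_mulVec, Matrix.mulVec_mulVec]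
      have hPttCross : ((cols A T)ᵀ * cols A T) * crossMat A T Δ =
          ((cols A T)ᵀ * cols A Δ) * (schur A T Δ)⁻¹ := by
        unfold crossMat
        rw [Matrix.mul_assoc (((cols A T)ᵀ * cols A T)⁻¹)]
        exact Matrix.mul_nonsing_inv_cancel_left _ _ hdetT
      have hc2 : ((cols A T)ᵀ * cols A T).mulVec aT =
          -((((cols A T)ᵀ * cols A Δ) * (schur A T Δ)⁻¹).mulVec gΔ) := by
        rw [haTdef, Matrix.mulVec_neg, Matrix.mulVec_mulVec, hPttCross]
      rw [hPj, he, hc1, Pi.add_apply, hc2, hbΔdef, Matrix.mulVec_mulVec]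
      simp [hgdef, hT]
    · have he : Bᵀ.mulVec (B.mulVec hvec) j =
          (cols A Δ)ᵀ.mulVec (B.mulVec hvec) ⟨j.1, hΔ⟩ :=
        colsT_mulVec_agree A S Δ _ j.2 hΔ
      have hc1 : (cols A Δ)ᵀ.mulVec (B.mulVec hvec) =
          ((cols A Δ)ᵀ * cols A T).mulVec aT + ((cols A Δ)ᵀ * cols A Δ).mulVec bΔ := by
        rw [hGlueMul, Matrix.mulVec_add, Matrix.mulVec_mulVec, Matrix.mulVec_mulVec]
      have hmat : ((cols A Δ)ᵀ * cols A Δ) * (schur A T Δ)⁻¹ -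
          ((cols A Δ)ᵀ * cols A T) * crossMat A T Δ = 1 := by
        have h5 : ((cols A Δ)ᵀ * cols A T) * crossMat A T Δ =
            (((cols A Δ)ᵀ * cols A T) *
              ((((cols A T)ᵀ * cols A T)⁻¹) * ((cols A T)ᵀ * cols A Δ))) *
                (schur A T Δ)⁻¹ := by
          unfold crossMat
          simp only [Matrix.mul_assoc]
        rw [h5, ← Matrix.sub_mul, ← hQexp, Matrix.mul_nonsing_inv _ hdetQ]
      have hval : ((cols A Δ)ᵀ * cols A T).mulVec aT + ((cols A Δ)ᵀ * cols A Δ).mulVec bΔ =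
          (1 : Matrix {j // j ∈ Δ} {j // j ∈ Δ} ℝ).mulVec gΔ := by
        rw [haTdef, Matrix.mulVec_neg, Matrix.mulVec_mulVec, hbΔdef, Matrix.mulVec_mulVec,
          ← hmat, Matrix.sub_mulVec]
        try abel
      rw [hPj, he, hc1, hval, Matrix.one_mulVec]
  have hlsq : lsq A S y = P⁻¹.mulVec (Bᵀ.mulVec y) := rfl
  have hu_eq : u0 = lsq A S y - γ • hvec := by
    have h1 := hcancel u0
    rw [hstat, Matrix.mulVec_sub, Matrix.mulVec_smul] at h1
    have h2 : P⁻¹.mulVec g = hvec := by rw [← hPh, hcancel]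
    rw [h2] at h1
    rw [hlsq]
    exact h1.symm
  -- least squares identity
  have hsuppx : suppOn x S := fun j hj => hx j (fun hN => hj (hNNe hN))
  have hAx : A.mulVec x = B.mulVec (subv x S) := by
    conv_lhs => rw [← ext_subv hsuppx]
    rw [hBdef, mulVec_ext]
  have hlsq_x : lsq A S y = subv x S + (P⁻¹ * Bᵀ).mulVec wn := by
    rw [hlsq]
    calc P⁻¹.mulVec (Bᵀ.mulVec y)
        = P⁻¹.mulVec (P.mulVec (subv x S) + Bᵀ.mulVec wn) := by
          rw [hy, Matrix.mulVec_add, hAx, Matrix.mulVec_mulVec, ← hPdef]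
      _ = subv x S + (P⁻¹ * Bᵀ).mulVec wn := by
          rw [Matrix.mulVec_add, hcancel, Matrix.mulVec_mulVec]
  -- residual decomposition and strict off-support bound
  have hBtil_c : A.mulVec btil - y =
      (B.mulVec (lsq A S y) - y) - γ • B.mulVec hvec := by
    rw [hABu, hu_eq, Matrix.mulVec_sub, Matrix.mulVec_smul, sub_right_comm]
  have hBh : B.mulVec hvec = (projM A T * cols A Δ * (schur A T Δ)⁻¹).mulVec gΔ := by
    rw [hGlueMul, haTdef, hbΔdef]
    have hmat2 : projM A T * cols A Δ * (schur A T Δ)⁻¹ =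
        cols A Δ * (schur A T Δ)⁻¹ - cols A T * crossMat A T Δ := by
      show (1 - cols A T * ((cols A T)ᵀ * cols A T)⁻¹ * (cols A T)ᵀ) * cols A Δ *
          (schur A T Δ)⁻¹ = cols A Δ * (schur A T Δ)⁻¹ - cols A T * crossMat A T Δ
      unfold crossMat
      rw [Matrix.sub_mul, Matrix.sub_mul, Matrix.one_mul]
      congr 1
      simp only [Matrix.mul_assoc]
    rw [hmat2, Matrix.sub_mulVec, Matrix.mulVec_neg, Matrix.mulVec_mulVec,
      Matrix.mulVec_mulVec]
    abel
  have hNt : (projM A T * cols A Δ * (schur A T Δ)⁻¹)ᵀ =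
      (schur A T Δ)⁻¹ * ((cols A Δ)ᵀ * projM A T) := by
    rw [Matrix.transpose_mul, Matrix.transpose_mul, hMsymm, Matrix.transpose_nonsing_inv,
      hQsymm]
  have hFoff : ∀ ω, ω ∉ S → |R ω| < γ := by
    intro ω hω
    have hR1 : R ω = -(Aᵀ.mulVec (y - B.mulVec (lsq A S y)) ω) -
        γ * (Aᵀ.mulVec (B.mulVec hvec) ω) := by
      have hv : A.mulVec btil - y = -(y - B.mulVec (lsq A S y)) - γ • B.mulVec hvec := by
        rw [hBtil_c, neg_sub]
      rw [hRdef, hv, Matrix.mulVec_sub, Matrix.mulVec_neg, Matrix.mulVec_smul]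
      simp [smul_eq_mul]
    have hD : |Aᵀ.mulVec (B.mulVec hvec) ω| ≤ erc A T Δ ω := by
      rw [hBh]
      have hstep : Aᵀ.mulVec ((projM A T * cols A Δ * (schur A T Δ)⁻¹).mulVec gΔ) ω =
          dotProduct (fun i => A i ω)
            ((projM A T * cols A Δ * (schur A T Δ)⁻¹).mulVec gΔ) := rfl
      rw [hstep, dotProduct_mulVec, ← Matrix.mulVec_transpose, hNt,
        ← Matrix.mulVec_mulVec]
      exact abs_dot_le_l1v _ gΔ (fun jj => hg1 _)
    have hE := hcond ω hω
    have hE1 : |Aᵀ.mulVec (y - B.mulVec (lsq A S y)) ω| ≤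
        linfv (Aᵀ.mulVec (y - B.mulVec (lsq A S y))) := abs_le_linfv _ ω
    calc |R ω| ≤ |Aᵀ.mulVec (y - B.mulVec (lsq A S y)) ω| +
        γ * |Aᵀ.mulVec (B.mulVec hvec) ω| := by
          rw [hR1, sub_eq_add_neg]
          refine (abs_add_le _ _).trans ?_
          rw [abs_neg, abs_neg, abs_mul, abs_of_pos hγ]
      _ < γ * (1 - erc A T Δ ω) + γ * erc A T Δ ω :=
          add_lt_add_of_lt_of_le (lt_of_le_of_lt hE1 hE)
            (mul_le_mul_of_nonneg_left hD hγ.le)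
      _ = γ := by ring
  -- coordinatewise KKT facts on the full index set
  have hRT : ∀ j ∈ T, R j = 0 := fun j hj => hKT ⟨j, Finset.mem_union_left _ hj⟩ hj
  have hRS : ∀ j, j ∈ S → j ∉ T → |R j| ≤ γ := fun j hjS hjT => hKTc1 ⟨j, hjS⟩ hjT
  have hRsign : ∀ j, (hjS : j ∈ S) → j ∉ T → btil j ≠ 0 →
      R j = -γ * Real.sign (btil j) := by
    intro j hjS hjT hne
    have hbj : btil j = u0 ⟨j, hjS⟩ := by rw [hbtil]; exact ext_mem u0 hjS
    rw [hbj] at hne ⊢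
    exact hKTc2 ⟨j, hjS⟩ hjT hne
  -- objective decomposition
  have hdecomp : ∀ b, objL A y γ T b = objL A y γ T btil +
      (1/2) * ∑ i, (A.mulVec (b - btil) i) ^ 2 +
      ∑ j, (R j * (b j - btil j) + (if j ∈ T then 0 else γ * (|b j| - |btil j|))) := by
    intro b
    have hsq : ∀ i, (y i - A.mulVec b i) ^ 2 =
        (y i - A.mulVec btil i) ^ 2 -
          2 * ((y i - A.mulVec btil i) * A.mulVec (b - btil) i) +
          (A.mulVec (b - btil) i) ^ 2 := by
      intro i
      have hq : y i - A.mulVec b i = (y i - A.mulVec btil i) - A.mulVec (b - btil) i := by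
        rw [Matrix.mulVec_sub]
        simp
      rw [hq]; ring
    have hcross : ∑ i, (y i - A.mulVec btil i) * A.mulVec (b - btil) i =
        -∑ j, R j * (b j - btil j) := by
      have h1 : ∑ i, (y i - A.mulVec btil i) * A.mulVec (b - btil) i =
          dotProduct (fun i => y i - A.mulVec btil i) (A.mulVec (b - btil)) := rfl
      have h2 : (fun i => y i - A.mulVec btil i) = -(A.mulVec btil - y) := by
        funext i; simp
      rw [h1, h2, dotProduct_mulVec, ← Matrix.mulVec_transpose, Matrix.mulVec_neg,
        ← hRdef]
      simp only [dotProduct, Pi.neg_apply, Pi.sub_apply, neg_mul]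
      rw [Finset.sum_neg_distrib]
    have hsum : ∑ i, (y i - A.mulVec b i) ^ 2 =
        (∑ i, (y i - A.mulVec btil i) ^ 2) + 2 * ∑ j, R j * (b j - btil j) +
          ∑ i, (A.mulVec (b - btil) i) ^ 2 := by
      rw [Finset.sum_congr rfl fun i _ => hsq i, Finset.sum_add_distrib,
        Finset.sum_sub_distrib, ← Finset.mul_sum, hcross]
      ring
    have hpen : ∑ j, (if j ∈ T then (0:ℝ) else γ * (|b j| - |btil j|)) =
        γ * l1c b T - γ * l1c btil T := by
      unfold l1c
      rw [sum_compl_eq T (fun j => |b j|), sum_compl_eq T (fun j => |btil j|),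
        Finset.mul_sum, Finset.mul_sum, ← Finset.sum_sub_distrib]
      refine Finset.sum_congr rfl fun j _ => ?_
      by_cases h : j ∈ T
      · simp [h]
      · simp only [if_neg h]; ring
    unfold objL
    rw [hsum, Finset.sum_add_distrib, hpen]
    ring
  -- each correction term is nonnegative
  have hRb : ∀ (c : ℝ) (bj : ℝ), |c| ≤ γ → 0 ≤ c * bj + γ * |bj| := by
    intro c bj hc
    have h1 : |c * bj| ≤ γ * |bj| := by
      rw [abs_mul]
      exact mul_le_mul_of_nonneg_right hc (abs_nonneg _)
    have h2 := neg_abs_le (c * bj)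
    linarith
  have hψpos : ∀ (b : Fin m → ℝ) (j : Fin m), 0 ≤ R j * (b j - btil j) +
      (if j ∈ T then 0 else γ * (|b j| - |btil j|)) := by
    intro b j
    by_cases hT : j ∈ T
    · rw [hRT j hT, if_pos hT, zero_mul, add_zero]
    · rw [if_neg hT]
      by_cases hS : j ∈ S
      · by_cases hne : btil j = 0
        · rw [hne, sub_zero, abs_zero, sub_zero]
          exact hRb _ _ (hRS j hS hT)
        · rw [hRsign j hS hT hne]
          have h1 : Real.sign (btil j) * btil j = |btil j| := sign_mul_self hne
          have h2 : γ * (Real.sign (btil j) * b j) ≤ γ * |b j| :=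
            mul_le_mul_of_nonneg_left (sign_mul_le_abs _ _) hγ.le
          nlinarith [h1, h2]
      · have hb0 : btil j = 0 := hsupp j hS
        rw [hb0, sub_zero, abs_zero, sub_zero]
        exact hRb _ _ (hFoff j hS).le
  -- global minimality
  have hglobal : ∀ b, objL A y γ T btil ≤ objL A y γ T b := by
    intro b
    rw [hdecomp b]
    have h1 : 0 ≤ (1/2) * ∑ i, (A.mulVec (b - btil) i) ^ 2 := by positivity
    have h2 : 0 ≤ ∑ j, (R j * (b j - btil j) +
        (if j ∈ T then 0 else γ * (|b j| - |btil j|))) :=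
      Finset.sum_nonneg fun j _ => hψpos b j
    linarith
  -- uniqueness
  have huniq : ∀ b, (∀ b', objL A y γ T b ≤ objL A y γ T b') → b = btil := by
    intro b hb
    have heq : objL A y γ T b = objL A y γ T btil := le_antisymm (hb btil) (hglobal b)
    have hdec := hdecomp b
    rw [heq] at hdec
    have h1 : 0 ≤ ∑ i, (A.mulVec (b - btil) i) ^ 2 :=
      Finset.sum_nonneg fun i _ => sq_nonneg _
    have h2 : 0 ≤ ∑ j, (R j * (b j - btil j) +
        (if j ∈ T then 0 else γ * (|b j| - |btil j|))) :=
      Finset.sum_nonneg fun j _ => hψpos b j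
    have hQ0 : ∑ i, (A.mulVec (b - btil) i) ^ 2 = 0 := by linarith
    have hψ0 : ∑ j, (R j * (b j - btil j) +
        (if j ∈ T then 0 else γ * (|b j| - |btil j|))) = 0 := by linarith
    have hψeach := (Finset.sum_eq_zero_iff_of_nonneg
      (fun j (_ : j ∈ Finset.univ) => hψpos b j)).1 hψ0
    have hboff : ∀ j, j ∉ S → b j = 0 := by
      intro j hjS
      by_contra hbj
      have hb0 : btil j = 0 := hsupp j hjS
      have h := hψeach j (Finset.mem_univ j)
      have hTj : j ∉ T := fun hT => hjS (Finset.mem_union_left _ hT)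
      rw [if_neg hTj, hb0, sub_zero, abs_zero, sub_zero] at h
      have h3 : |R j * b j| < γ * |b j| := by
        rw [abs_mul]
        exact mul_lt_mul_of_pos_right (hFoff j hjS) (abs_pos.2 hbj)
      have h4 := neg_abs_le (R j * b j)
      linarith
    have hAv : A.mulVec (b - btil) = 0 := by
      funext i
      have := (Finset.sum_eq_zero_iff_of_nonneg
        (fun i (_ : i ∈ Finset.univ) => sq_nonneg (A.mulVec (b - btil) i))).1 hQ0 i
        (Finset.mem_univ i)
      exact pow_eq_zero_iff two_ne_zero |>.1 this
    have hsuppv : suppOn (b - btil) S := fun j hj => by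
      rw [Pi.sub_apply, hboff j hj, hsupp j hj, sub_zero]
    have hsv := hBinj (subv (b - btil) S) (by rw [hBdef, ← mulVec_ext, ext_subv hsuppv, hAv])
    have hv0 : b - btil = 0 := by
      rw [← ext_subv hsuppv, hsv]
      funext j
      by_cases h : j ∈ S
      · rw [ext_mem _ h]; rfl
      · rw [ext_not_mem _ h]; rfl
    exact sub_eq_zero.1 hv0
  -- final assembly
  refine ⟨btil, hglobal, huniq, hsupp, ?_⟩
  have hb0 : 0 ≤ γ * max (matInf (crossMat A T Δ)) (matInf ((schur A T Δ)⁻¹)) +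
      matInf (P⁻¹ * Bᵀ) * linfv wn :=
    add_nonneg (mul_nonneg hγ.le (le_max_of_le_left (matInf_nonneg _)))
      (mul_nonneg (matInf_nonneg _) (linfv_nonneg _))
  apply linfv_le hb0
  intro j
  by_cases hjS : j ∈ S
  · have hδ1 : (btil - x) j = ((P⁻¹ * Bᵀ).mulVec wn) ⟨j, hjS⟩ - γ * hvec ⟨j, hjS⟩ := by
      rw [Pi.sub_apply, hbtil, ext_mem u0 hjS, hu_eq, hlsq_x]
      simp only [Pi.sub_apply, Pi.add_apply, Pi.smul_apply, smul_eq_mul]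
      have : subv x S ⟨j, hjS⟩ = x j := rfl
      rw [this]
      ring
    rw [hδ1]
    have h1 : |((P⁻¹ * Bᵀ).mulVec wn) ⟨j, hjS⟩| ≤ matInf (P⁻¹ * Bᵀ) * linfv wn :=
      abs_mulVec_le _ _ _
    have hlg : linfv gΔ ≤ 1 := linfv_le zero_le_one (fun jj => hg1 _)
    have h2 : |hvec ⟨j, hjS⟩| ≤
        max (matInf (crossMat A T Δ)) (matInf ((schur A T Δ)⁻¹)) := by
      rcases Finset.mem_union.1 hjS with hT | hΔ
      · rw [hhdef, glue_left aT bΔ (j := ⟨j, hjS⟩) hT, haTdef, Pi.neg_apply, abs_neg]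
        calc |(crossMat A T Δ).mulVec gΔ ⟨j, hT⟩| ≤ matInf (crossMat A T Δ) * linfv gΔ :=
              abs_mulVec_le _ _ _
          _ ≤ matInf (crossMat A T Δ) * 1 :=
              mul_le_mul_of_nonneg_left hlg (matInf_nonneg _)
          _ = matInf (crossMat A T Δ) := mul_one _
          _ ≤ _ := le_max_left _ _
      · rw [hhdef, glue_right hdisj aT bΔ (j := ⟨j, hjS⟩) hΔ, hbΔdef]
        calc |(schur A T Δ)⁻¹.mulVec gΔ ⟨j, hΔ⟩| ≤ matInf ((schur A T Δ)⁻¹) * linfv gΔ :=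
              abs_mulVec_le _ _ _
          _ ≤ matInf ((schur A T Δ)⁻¹) * 1 :=
              mul_le_mul_of_nonneg_left hlg (matInf_nonneg _)
          _ = matInf ((schur A T Δ)⁻¹) := mul_one _
          _ ≤ _ := le_max_right _ _
    calc |((P⁻¹ * Bᵀ).mulVec wn) ⟨j, hjS⟩ - γ * hvec ⟨j, hjS⟩| ≤
        |((P⁻¹ * Bᵀ).mulVec wn) ⟨j, hjS⟩| + γ * |hvec ⟨j, hjS⟩| := by
          rw [sub_eq_add_neg]
          refine (abs_add_le _ _).trans ?_
          rw [abs_neg, abs_mul, abs_of_pos hγ]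
      _ ≤ matInf (P⁻¹ * Bᵀ) * linfv wn +
          γ * max (matInf (crossMat A T Δ)) (matInf ((schur A T Δ)⁻¹)) :=
          add_le_add h1 (mul_le_mul_of_nonneg_left h2 hγ.le)
      _ = _ := by ring
  · have hz : (btil - x) j = 0 := by
      rw [Pi.sub_apply, hsupp j hjS, hx j (fun hN => hjS (hNNe hN)), sub_zero]
    rw [hz, abs_zero]
    exact hb0
end
end

section
/- Under the same setup (y = Ax + w, x supported on N ⊆ N_e = T∪Δ, A_{N_e} full column rank, sufficient condition ‖A'(y − A_{N_e}c_{N_e})‖_∞ < γ[1 − max_{ω∉N_e}‖(A_Δ'MA_Δ)^{-1}A_Δ'MA_ω‖₁] holds), the global minimizer b̃ of L satisfies the ℓ² bound ‖b̃ − x‖₂ ≤ ‖(A_{N_e}'A_{N_e})^{-1}A_{N_e}'‖₂‖w‖₂ + γ√|Δ|·√(‖(A_T'A_T)^{-1}A_T'A_Δ(A_Δ'MA_Δ)^{-1}‖₂² + ‖(A_Δ'MA_Δ)^{-1}‖₂²). -/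
open Matrix Finset

noncomputable section

variable {n m : ℕ}

lemma l2v_eq_norm {k : Type*} [Fintype k] (v : EuclideanSpace ℝ k) : l2v v = ‖v‖ := by
  rw [EuclideanSpace.norm_eq, l2v]
  congr 1; apply Finset.sum_congr rfl; intro i _
  rw [Real.norm_eq_abs, sq_abs]

def mulVecCLM {k l : Type*} [Fintype k] [Fintype l] (B : Matrix k l ℝ) :
    EuclideanSpace ℝ l →L[ℝ] EuclideanSpace ℝ k :=
  LinearMap.toContinuousLinearMap
    { toFun := fun x => WithLp.toLp 2 (B.mulVec x)
      map_add' := fun x y => by ext i; simp [Matrix.mulVec_add]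
      map_smul' := fun c x => by ext i; simp [Matrix.mulVec_smul] }

lemma spec_eq_opNorm {k l : Type*} [Fintype k] [Fintype l] (B : Matrix k l ℝ) :
    spec B = ‖mulVecCLM B‖ := by
  rw [← ContinuousLinearMap.sSup_unitClosedBall_eq_norm, spec]
  congr 1
  ext r
  constructor
  · rintro ⟨x, hx, rfl⟩
    refine ⟨WithLp.toLp 2 x, ?_, ?_⟩
    · simpa [Metric.mem_closedBall, dist_zero_right, ← l2v_eq_norm] using hx
    · simp [← l2v_eq_norm]; rfl
  · rintro ⟨x, hx, rfl⟩
    refine ⟨x.ofLp, ?_, ?_⟩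
    · simpa [Metric.mem_closedBall, dist_zero_right, ← l2v_eq_norm] using hx
    · simp [← l2v_eq_norm]; rfl

lemma spec_nonneg {k l : Type*} [Fintype k] [Fintype l] (B : Matrix k l ℝ) : 0 ≤ spec B := by
  rw [spec_eq_opNorm]; exact norm_nonneg _

lemma l2v_mulVec_le {k l : Type*} [Fintype k] [Fintype l] (B : Matrix k l ℝ) (v : l → ℝ) :
    l2v (B.mulVec v) ≤ spec B * l2v v := by
  rw [spec_eq_opNorm, show l2v v = ‖(WithLp.toLp 2 v : EuclideanSpace ℝ l)‖ from l2v_eq_norm _,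
    show l2v (B.mulVec v) = ‖mulVecCLM B (WithLp.toLp 2 v : EuclideanSpace ℝ l)‖ from
      l2v_eq_norm (WithLp.toLp 2 (B.mulVec v) : EuclideanSpace ℝ k)]
  exact (mulVecCLM B).le_opNorm _

lemma key1 {a B δ : ℝ} (ha : 0 ≤ a) (hδ : 0 < δ)
    (h : ∀ t, |t| ≤ δ → 0 ≤ a * t^2 + B * t) : B = 0 := by
  by_contra hB
  have habs : 0 < |B| := abs_pos.mpr hB
  set ε := min δ (|B|/(a+1)) with hε
  have hε0 : 0 < ε := lt_min hδ (by positivity)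
  have hεδ : ε ≤ δ := min_le_left _ _
  have hεB : ε ≤ |B|/(a+1) := min_le_right _ _
  have h1 := h ε (by rw [abs_of_pos hε0]; exact hεδ)
  have h2 := h (-ε) (by rw [abs_neg, abs_of_pos hε0]; exact hεδ)
  have hBε : |B| * ε ≤ a * ε^2 := by
    rw [show |B| * ε = |B * ε| by rw [abs_mul, abs_of_pos hε0]]
    apply abs_le.mpr; constructor <;> nlinarith
  have hq : |B| = (|B|/(a+1)) * (a+1) := by field_simp
  nlinarith [mul_le_mul_of_nonneg_right (mul_le_mul_of_nonneg_left hεB ha) hε0.le,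
    mul_pos hε0 (div_pos habs (by linarith : (0:ℝ) < a+1))]

lemma key2 {a B γ : ℝ} (ha : 0 ≤ a)
    (h : ∀ t, 0 ≤ a * t^2 + B * t + γ * |t|) : |B| ≤ γ := by
  by_contra hB
  push_neg at hB
  set ε := (|B| - γ)/(a+1) with hεdef
  have hε0 : 0 < ε := by apply div_pos <;> linarith
  have key : 0 ≤ a * ε^2 - |B| * ε + γ * ε := by
    rcases le_or_gt 0 B with hs | hs
    · have := h (-ε)
      rw [abs_neg, abs_of_pos hε0] at this
      rw [abs_of_nonneg hs]; nlinarith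
    · have := h ε
      rw [abs_of_pos hε0] at this
      rw [abs_of_neg hs]; nlinarith
  have h5 : (a+1)*ε = |B| - γ := by rw [hεdef]; field_simp
  nlinarith [mul_pos hε0 hε0]

lemma coordT {a β : ℝ} (ha : 0 ≤ a) (h : ∀ t, 0 ≤ a * t^2 + β * t) : β = 0 :=
  key1 ha one_pos (fun t _ => h t)

lemma coordD {a β γ c : ℝ} (ha : 0 ≤ a) (hγ : 0 < γ)
    (h : ∀ t, 0 ≤ a * t^2 + β * t + γ * (|c + t| - |c|)) :
    |β| ≤ γ ∧ β * c = -(γ * |c|) := by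
  rcases eq_or_ne c 0 with rfl | hc
  · constructor
    · apply key2 ha; intro t; have := h t; simpa using this
    · simp
  · have hB : β + γ * (if 0 < c then 1 else -1) = 0 := by
      apply key1 (δ := |c|) ha (abs_pos.mpr hc)
      intro t ht
      have habs : |c + t| - |c| = (if 0 < c then 1 else -1) * t := by
        rcases lt_or_gt_of_ne hc with hneg | hpos
        · rw [if_neg (not_lt.mpr hneg.le), abs_of_neg hneg,
            abs_of_nonpos (by rw [abs_of_neg hneg] at ht; cases abs_le.mp ht; linarith)]
          ring
        · rw [if_pos hpos, abs_of_pos hpos,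
            abs_of_nonneg (by rw [abs_of_pos hpos] at ht; cases abs_le.mp ht; linarith)]
          ring
      have := h t
      rw [habs] at this
      nlinarith
    rcases lt_or_gt_of_ne hc with hneg | hpos
    · rw [if_neg (not_lt.mpr hneg.le)] at hB
      constructor
      · have : β = γ := by linarith
        rw [this, abs_of_pos hγ]
      · rw [abs_of_neg hneg]; nlinarith
    · rw [if_pos hpos] at hB
      constructor
      · have : β = -γ := by linarith
        rw [this, abs_neg, abs_of_pos hγ]
      · rw [abs_of_pos hpos]; nlinarith

lemma objL_perturb (A : Matrix (Fin n) (Fin m) ℝ) (y : Fin n → ℝ) (γ : ℝ) (T : Finset (Fin m))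
    (b : Fin m → ℝ) (j : Fin m) (t : ℝ) :
    objL A y γ T (b + Pi.single j t) =
      objL A y γ T b + (1/2 * ∑ i, (A i j)^2) * t^2
        + (∑ i, A i j * (A.mulVec b i - y i)) * t
        + γ * (if j ∈ T then 0 else |b j + t| - |b j|) := by
  have hmv : ∀ i, A.mulVec (b + Pi.single j t) i = A.mulVec b i + A i j * t := by
    intro i
    rw [Matrix.mulVec_add]
    simp [Matrix.mulVec_single]
    ring
  have hquad : ∑ i, (y i - A.mulVec (b + Pi.single j t) i)^2 =
      ∑ i, ((y i - A.mulVec b i)^2 + (A i j)^2 * t^2 + (A i j * (A.mulVec b i - y i)) * (2*t)) := by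
    apply Finset.sum_congr rfl; intro i _
    rw [hmv i]; ring
  have hl1 : l1c (b + Pi.single j t) T =
      l1c b T + (if j ∈ T then 0 else |b j + t| - |b j|) := by
    by_cases hj : j ∈ T
    · rw [if_pos hj, add_zero, l1c, l1c]
      apply Finset.sum_congr rfl
      intro i hi
      have : i ≠ j := by rintro rfl; exact (Finset.mem_compl.mp hi) hj
      simp [Pi.single_eq_of_ne this]
    · rw [if_neg hj, l1c, l1c]
      have hjc : j ∈ Tᶜ := Finset.mem_compl.mpr hj
      simp only [Pi.add_apply]
      rw [← Finset.add_sum_erase Tᶜ (fun i => |b i + (Pi.single j t : Fin m → ℝ) i|) hjc,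
        ← Finset.add_sum_erase Tᶜ (fun i => |b i|) hjc]
      have : ∑ i ∈ Tᶜ.erase j, |b i + (Pi.single j t : Fin m → ℝ) i| = ∑ i ∈ Tᶜ.erase j, |b i| := by
        apply Finset.sum_congr rfl
        intro i hi
        have : i ≠ j := Finset.ne_of_mem_erase hi
        simp [Pi.single_eq_of_ne this]
      rw [this]
      simp only [Pi.single_eq_same]
      ring
  rw [objL, objL, hquad, hl1]
  rw [Finset.sum_add_distrib, Finset.sum_add_distrib, ← Finset.sum_mul, ← Finset.sum_mul]
  ring

/-- KKT conditions at a restricted minimizer. -/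
lemma kkt_coord (A : Matrix (Fin n) (Fin m) ℝ) (y : Fin n → ℝ) {γ : ℝ} (hγ : 0 < γ)
    (T S : Finset (Fin m)) (b : Fin m → ℝ) (hb : suppOn b S)
    (hmin : ∀ b', suppOn b' S → objL A y γ T b ≤ objL A y γ T b')
    (j : Fin m) (hj : j ∈ S) :
    (j ∈ T → (∑ i, A i j * (A.mulVec b i - y i)) = 0) ∧
    (j ∉ T → |∑ i, A i j * (A.mulVec b i - y i)| ≤ γ ∧
      (∑ i, A i j * (A.mulVec b i - y i)) * b j = -(γ * |b j|)) := by
  set β := ∑ i, A i j * (A.mulVec b i - y i) with hβ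
  have hs : (0:ℝ) ≤ 1/2 * ∑ i, (A i j)^2 := by positivity
  have hpert : ∀ t, 0 ≤ (1/2 * ∑ i, (A i j)^2) * t^2 + β * t
      + γ * (if j ∈ T then 0 else |b j + t| - |b j|) := by
    intro t
    have hsupp : suppOn (b + Pi.single j t) S := by
      intro i hi
      have : i ≠ j := by rintro rfl; exact hi hj
      simp [hb i hi, Pi.single_eq_of_ne this]
    have := hmin _ hsupp
    rw [objL_perturb] at this
    linarith
  constructor
  · intro hjT
    apply coordT hs
    intro t
    have := hpert t
    rw [if_pos hjT] at this
    linarith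
  · intro hjT
    apply coordD hs hγ
    intro t
    have := hpert t
    rw [if_neg hjT] at this
    linarith

/-- Extension of a subtype vector by zero. -/
def extv {S : Finset (Fin m)} (z : {j // j ∈ S} → ℝ) : Fin m → ℝ :=
  fun j => if h : j ∈ S then z ⟨j, h⟩ else 0

lemma extv_mem {S : Finset (Fin m)} (z : {j // j ∈ S} → ℝ) {j : Fin m} (h : j ∈ S) :
    extv z j = z ⟨j, h⟩ := dif_pos h

lemma extv_not_mem {S : Finset (Fin m)} (z : {j // j ∈ S} → ℝ) {j : Fin m} (h : j ∉ S) :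
    extv z j = 0 := dif_neg h

lemma suppOn_extv {S : Finset (Fin m)} (z : {j // j ∈ S} → ℝ) : suppOn (extv z) S :=
  fun _ h => dif_neg h

lemma subv_extv {S : Finset (Fin m)} (z : {j // j ∈ S} → ℝ) : subv (extv z) S = z := by
  funext j
  rw [subv, extv_mem z j.2]

lemma extv_eq_zero_iff {S : Finset (Fin m)} {z : {j // j ∈ S} → ℝ} (h : extv z = 0) : z = 0 := by
  funext j
  have := congrFun h j.1
  rwa [extv_mem z j.2] at this

/-- sum over subtype vs sum over finset. -/
lemma sum_sub_eq {S : Finset (Fin m)} (f : {j // j ∈ S} → ℝ) (f' : Fin m → ℝ)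
    (hf : ∀ j (h : j ∈ S), f ⟨j, h⟩ = f' j) :
    ∑ j : {j // j ∈ S}, f j = ∑ j ∈ S, f' j := by
  rw [Finset.sum_subtype S (fun x => Iff.rfl) f']
  apply Finset.sum_congr rfl
  intro x _
  rw [← hf x.1 x.2]

lemma mulVec_suppOn (A : Matrix (Fin n) (Fin m) ℝ) {S : Finset (Fin m)} {b : Fin m → ℝ}
    (hb : suppOn b S) : A.mulVec b = (cols A S).mulVec (subv b S) := by
  funext i
  rw [Matrix.mulVec, Matrix.mulVec, dotProduct, dotProduct]
  rw [sum_sub_eq (fun j => cols A S i j * subv b S j) (fun j => A i j * b j)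
    (fun j h => rfl)]
  symm
  apply Finset.sum_subset (Finset.subset_univ S)
  intro j _ hj
  rw [hb j hj, mul_zero]

lemma colsT_mulVec_apply (A : Matrix (Fin n) (Fin m) ℝ) {S : Finset (Fin m)}
    (w : Fin n → ℝ) (j : {j // j ∈ S}) :
    ((cols A S)ᵀ.mulVec w) j = ∑ i, A i j.1 * w i := rfl

/-- Splitting a mulVec over a disjoint union of column sets, full-vector version. -/
lemma mulVec_split (A : Matrix (Fin n) (Fin m) ℝ) {T Δ : Finset (Fin m)}
    (hdisj : Disjoint T Δ) {b : Fin m → ℝ} (hb : suppOn b (T ∪ Δ)) :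
    A.mulVec b = (cols A T).mulVec (subv b T) + (cols A Δ).mulVec (subv b Δ) := by
  set bT : Fin m → ℝ := fun j => if j ∈ T then b j else 0 with hbT
  set bΔ : Fin m → ℝ := fun j => if j ∈ Δ then b j else 0 with hbΔ
  have hsum : b = bT + bΔ := by
    funext j
    by_cases hT : j ∈ T
    · have hΔ : j ∉ Δ := Finset.disjoint_left.mp hdisj hT
      simp [hbT, hbΔ, if_pos hT, if_neg hΔ]
    · by_cases hΔ : j ∈ Δ
      · simp [hbT, hbΔ, if_neg hT, if_pos hΔ]
      · have : b j = 0 := hb j (by simp [Finset.mem_union, hT, hΔ])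
        simp [hbT, hbΔ, if_neg hT, if_neg hΔ, this]
  have hsT : subv bT T = subv b T := by
    funext j; simp [subv, hbT, if_pos j.2]
  have hsΔ : subv bΔ Δ = subv b Δ := by
    funext j; simp [subv, hbΔ, if_pos j.2]
  have h1 : A.mulVec bT = (cols A T).mulVec (subv b T) := by
    rw [mulVec_suppOn A (S := T) (b := bT) (fun j hj => by simp [hbT, if_neg hj]), hsT]
  have h2 : A.mulVec bΔ = (cols A Δ).mulVec (subv b Δ) := by
    rw [mulVec_suppOn A (S := Δ) (b := bΔ) (fun j hj => by simp [hbΔ, if_neg hj]), hsΔ]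
  conv_lhs => rw [hsum]
  rw [Matrix.mulVec_add, h1, h2]

/-- z ⬝ᵥ (Bᵀ *ᵥ w) = (B *ᵥ z) ⬝ᵥ w -/
lemma dot_transpose_mulVec {k l : Type*} [Fintype k] [Fintype l]
    (B : Matrix k l ℝ) (z : l → ℝ) (w : k → ℝ) :
    z ⬝ᵥ (Bᵀ.mulVec w) = (B.mulVec z) ⬝ᵥ w := by
  rw [Matrix.dotProduct_mulVec, Matrix.vecMul_transpose]

lemma sq_sum_eq_zero {k : Type*} [Fintype k] {u : k → ℝ} (h : ∑ i, u i ^ 2 = 0) : u = 0 := by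
  funext i
  have := (Finset.sum_eq_zero_iff_of_nonneg (fun i _ => sq_nonneg (u i))).mp h i (Finset.mem_univ i)
  exact (pow_eq_zero_iff two_ne_zero).mp this

/-- z ⬝ᵥ Gram z = ∑ (Bz)². -/
lemma dot_gram_eq_sq {k : Type*} [Fintype k] (B : Matrix (Fin n) k ℝ) (z : k → ℝ) :
    z ⬝ᵥ ((Bᵀ * B).mulVec z) = ∑ i, (B.mulVec z i) ^ 2 := by
  rw [← Matrix.mulVec_mulVec, dot_transpose_mulVec, dotProduct]
  apply Finset.sum_congr rfl; intro i _; ring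

lemma gram_kernel_zero {k : Type*} [Fintype k] {B : Matrix (Fin n) k ℝ} {z : k → ℝ}
    (h : (Bᵀ * B).mulVec z = 0) : B.mulVec z = 0 := by
  apply sq_sum_eq_zero (u := B.mulVec z)
  rw [← dot_gram_eq_sq, h, dotProduct_zero]

lemma isUnit_of_kernel {k : Type*} [Fintype k] [DecidableEq k] {G : Matrix k k ℝ}
    (h : ∀ z, G.mulVec z = 0 → z = 0) : IsUnit G := by
  rw [← Matrix.mulVec_injective_iff_isUnit]
  intro z z' hzz
  have := h (z - z') (by rw [Matrix.mulVec_sub, hzz, sub_self])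
  exact sub_eq_zero.mp this

lemma mulVec_isUnit_cancel {k : Type*} [Fintype k] [DecidableEq k] {G : Matrix k k ℝ}
    (hG : IsUnit G) {z : k → ℝ} (h : G.mulVec z = 0) : z = 0 := by
  have hdet := (Matrix.isUnit_iff_isUnit_det _).mp hG
  have := congrArg (G⁻¹.mulVec ·) h
  simpa [Matrix.mulVec_mulVec, Matrix.nonsing_inv_mul _ hdet] using this

lemma isUnit_gram_subset (A : Matrix (Fin n) (Fin m) ℝ) {S S' : Finset (Fin m)}
    (hSS : S ⊆ S') (hrank : IsUnit ((cols A S')ᵀ * cols A S')) :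
    IsUnit ((cols A S)ᵀ * cols A S) := by
  apply isUnit_of_kernel
  intro z hz
  have hAz : (cols A S).mulVec z = 0 := gram_kernel_zero hz
  have hsupp' : suppOn (extv z) S' := fun j hj => extv_not_mem z (fun hS => hj (hSS hS))
  have hfull : A.mulVec (extv z) = 0 := by
    rw [mulVec_suppOn A (suppOn_extv z), subv_extv]; exact hAz
  have h2 : (cols A S').mulVec (subv (extv z) S') = 0 := by
    rw [← mulVec_suppOn A hsupp']; exact hfull
  have h3 : ((cols A S')ᵀ * cols A S').mulVec (subv (extv z) S') = 0 := by
    rw [← Matrix.mulVec_mulVec, h2, Matrix.mulVec_zero]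
  have h4 := mulVec_isUnit_cancel hrank h3
  apply extv_eq_zero_iff
  funext j
  by_cases hj : j ∈ S'
  · exact congrFun h4 ⟨j, hj⟩
  · exact extv_not_mem z (fun hS => hj (hSS hS))

section MFacts
variable (A : Matrix (Fin n) (Fin m) ℝ) (T Δ : Finset (Fin m))

lemma projM_def : projM A T = 1 - cols A T * ((cols A T)ᵀ * cols A T)⁻¹ * (cols A T)ᵀ := rfl
lemma schur_def : schur A T Δ = (cols A Δ)ᵀ * projM A T * cols A Δ := rfl

lemma gram_transpose (S : Finset (Fin m)) : ((cols A S)ᵀ * cols A S)ᵀ = (cols A S)ᵀ * cols A S := by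
  rw [Matrix.transpose_mul, Matrix.transpose_transpose]

lemma projM_transpose : (projM A T)ᵀ = projM A T := by
  rw [projM_def, Matrix.transpose_sub, Matrix.transpose_one, Matrix.transpose_mul,
    Matrix.transpose_mul, Matrix.transpose_transpose, Matrix.transpose_nonsing_inv,
    gram_transpose, Matrix.mul_assoc]

lemma gram_inv_mul {S : Finset (Fin m)} (hG : IsUnit ((cols A S)ᵀ * cols A S)) :
    ((cols A S)ᵀ * cols A S)⁻¹ * ((cols A S)ᵀ * cols A S) = 1 :=
  Matrix.nonsing_inv_mul _ ((Matrix.isUnit_iff_isUnit_det _).mp hG)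

lemma projM_mul_colsT (hGT : IsUnit ((cols A T)ᵀ * cols A T)) :
    projM A T * cols A T = 0 := by
  rw [projM_def, Matrix.sub_mul, Matrix.one_mul]
  simp only [Matrix.mul_assoc]
  rw [gram_inv_mul A hGT, Matrix.mul_one, sub_self]

lemma projM_idem (hGT : IsUnit ((cols A T)ᵀ * cols A T)) :
    projM A T * projM A T = projM A T := by
  nth_rewrite 2 [projM_def]
  rw [Matrix.mul_sub, Matrix.mul_one, ← Matrix.mul_assoc, ← Matrix.mul_assoc,
    projM_mul_colsT A T hGT, Matrix.zero_mul, Matrix.zero_mul, sub_zero]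

lemma schur_eq_gram (hGT : IsUnit ((cols A T)ᵀ * cols A T)) :
    schur A T Δ = (projM A T * cols A Δ)ᵀ * (projM A T * cols A Δ) := by
  rw [Matrix.transpose_mul, Matrix.mul_assoc, ← Matrix.mul_assoc (projM A T)ᵀ,
    projM_transpose, projM_idem A T hGT, schur_def, Matrix.mul_assoc]

lemma schur_transpose : (schur A T Δ)ᵀ = schur A T Δ := by
  rw [schur_def, Matrix.transpose_mul, Matrix.transpose_mul, Matrix.transpose_transpose,
    projM_transpose, Matrix.mul_assoc]

lemma subv_extv_disjoint_T {z : {j // j ∈ Δ} → ℝ} (hdisj : Disjoint T Δ) :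
    subv (extv z) T = 0 := by
  funext j
  exact extv_not_mem z (Finset.disjoint_left.mp hdisj j.2)

lemma isUnit_schur (hdisj : Disjoint T Δ)
    (hrank : IsUnit ((cols A (T ∪ Δ))ᵀ * cols A (T ∪ Δ))) : IsUnit (schur A T Δ) := by
  have hGT := isUnit_gram_subset A Finset.subset_union_left hrank
  apply isUnit_of_kernel
  intro z hz
  have hCz : (projM A T * cols A Δ).mulVec z = 0 := by
    apply gram_kernel_zero
    rw [← schur_eq_gram A T Δ hGT]
    exact hz
  set u : {j // j ∈ T} → ℝ :=
    ((((cols A T)ᵀ * cols A T)⁻¹ * ((cols A T)ᵀ * cols A Δ))).mulVec z with hu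
  have hPt : (cols A Δ).mulVec z = (cols A T).mulVec u := by
    have h0 := hCz
    rw [projM_def, Matrix.sub_mul, Matrix.one_mul, Matrix.sub_mulVec] at h0
    have h1 := sub_eq_zero.mp h0
    rw [h1, hu]
    simp only [Matrix.mulVec_mulVec, Matrix.mul_assoc]
  set b : Fin m → ℝ := extv u - extv z with hb
  have hsupp : suppOn b (T ∪ Δ) := by
    intro j hj
    rw [Finset.mem_union] at hj
    push_neg at hj
    simp [hb, extv_not_mem u hj.1, extv_not_mem z hj.2]
  have hsubT : subv b T = u := by
    funext j
    simp only [hb, subv, Pi.sub_apply, extv_mem u j.2,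
      extv_not_mem z (Finset.disjoint_left.mp hdisj j.2), sub_zero]
  have hsubΔ : subv b Δ = -z := by
    funext j
    simp only [hb, subv, Pi.sub_apply, Pi.neg_apply, extv_mem z j.2,
      extv_not_mem u (Finset.disjoint_right.mp hdisj j.2), zero_sub]
  have hAb : A.mulVec b = 0 := by
    rw [mulVec_split A hdisj hsupp, hsubT, hsubΔ, Matrix.mulVec_neg, hPt, add_neg_cancel]
  have hss : subv b (T ∪ Δ) = 0 := by
    apply mulVec_isUnit_cancel hrank
    rw [← Matrix.mulVec_mulVec, ← mulVec_suppOn A hsupp, hAb, Matrix.mulVec_zero]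
  funext j
  have hbj : b j.1 = 0 := congrFun hss ⟨j.1, Finset.mem_union_right T j.2⟩
  have h2 := congrFun hsubΔ j
  rw [subv] at h2
  rw [hbj] at h2
  simpa using h2.symm

end MFacts

section Solve
variable (A : Matrix (Fin n) (Fin m) ℝ) (T Δ : Finset (Fin m))

lemma crossMat_def : crossMat A T Δ =
    ((cols A T)ᵀ * cols A T)⁻¹ * ((cols A T)ᵀ * cols A Δ) * (schur A T Δ)⁻¹ := rfl

lemma kkt_solve (hdisj : Disjoint T Δ)
    (hrank : IsUnit ((cols A (T ∪ Δ))ᵀ * cols A (T ∪ Δ)))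
    (γ : ℝ) (g : {j // j ∈ Δ} → ℝ) (d : Fin m → ℝ) (hd : suppOn d (T ∪ Δ))
    (hE1 : ∀ (j : Fin m), j ∈ T → ∑ i, A i j * (A.mulVec d i) = 0)
    (hE2 : ∀ (j : Fin m) (h : j ∈ Δ), ∑ i, A i j * (A.mulVec d i) = -γ * g ⟨j, h⟩) :
    subv d Δ = (-γ) • (schur A T Δ)⁻¹.mulVec g ∧
    subv d T = γ • (crossMat A T Δ).mulVec g ∧
    A.mulVec d = (-γ) • (projM A T * cols A Δ).mulVec ((schur A T Δ)⁻¹.mulVec g) := by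
  have hGT := isUnit_gram_subset A Finset.subset_union_left hrank
  have hdetGT := (Matrix.isUnit_iff_isUnit_det _).mp hGT
  have hS := isUnit_schur A T Δ hdisj hrank
  have hdetS := (Matrix.isUnit_iff_isUnit_det _).mp hS
  set dT := subv d T with hdT0
  set dΔ := subv d Δ with hdΔ0
  have hAd : A.mulVec d = (cols A T).mulVec dT + (cols A Δ).mulVec dΔ :=
    mulVec_split A hdisj hd
  have hE1' : (cols A T)ᵀ.mulVec (A.mulVec d) = 0 := by
    funext j
    rw [colsT_mulVec_apply]
    exact hE1 j.1 j.2
  have hE2' : (cols A Δ)ᵀ.mulVec (A.mulVec d) = (-γ) • g := by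
    funext j
    rw [colsT_mulVec_apply]
    rw [hE2 j.1 j.2]
    rfl
  -- solve for dT
  have hgram1 : ((cols A T)ᵀ * cols A T).mulVec dT
      + ((cols A T)ᵀ * cols A Δ).mulVec dΔ = 0 := by
    rw [← hE1']
    rw [hAd, Matrix.mulVec_add, Matrix.mulVec_mulVec, Matrix.mulVec_mulVec]
  have hdT : dT = -((((cols A T)ᵀ * cols A T)⁻¹ * ((cols A T)ᵀ * cols A Δ)).mulVec dΔ) := by
    have h1 : ((cols A T)ᵀ * cols A T).mulVec dT = -(((cols A T)ᵀ * cols A Δ).mulVec dΔ) := by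
      linear_combination (norm := module) hgram1
    calc dT = (((cols A T)ᵀ * cols A T)⁻¹ * ((cols A T)ᵀ * cols A T)).mulVec dT := by
              rw [gram_inv_mul A hGT, Matrix.one_mulVec]
      _ = (((cols A T)ᵀ * cols A T)⁻¹).mulVec ((((cols A T)ᵀ * cols A T)).mulVec dT) := by
              rw [Matrix.mulVec_mulVec]
      _ = -((((cols A T)ᵀ * cols A T)⁻¹ * ((cols A T)ᵀ * cols A Δ)).mulVec dΔ) := by
              rw [h1, Matrix.mulVec_neg, Matrix.mulVec_mulVec]
  have hAd2 : A.mulVec d = (projM A T * cols A Δ).mulVec dΔ := by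
    rw [hAd, hdT, projM_def, Matrix.sub_mul, Matrix.one_mul, Matrix.sub_mulVec]
    rw [Matrix.mulVec_neg]
    simp only [Matrix.mulVec_mulVec, Matrix.mul_assoc]
    abel
  have hschurEq : (schur A T Δ).mulVec dΔ = (-γ) • g := by
    rw [← hE2', hAd2, Matrix.mulVec_mulVec, schur_def, Matrix.mul_assoc]
  have hdΔ : dΔ = (-γ) • (schur A T Δ)⁻¹.mulVec g := by
    calc dΔ = ((schur A T Δ)⁻¹ * (schur A T Δ)).mulVec dΔ := by
              rw [Matrix.nonsing_inv_mul _ hdetS, Matrix.one_mulVec]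
      _ = (schur A T Δ)⁻¹.mulVec ((schur A T Δ).mulVec dΔ) := by rw [Matrix.mulVec_mulVec]
      _ = (-γ) • (schur A T Δ)⁻¹.mulVec g := by rw [hschurEq, Matrix.mulVec_smul]
  refine ⟨hdΔ, ?_, ?_⟩
  · rw [hdT, hdΔ, Matrix.mulVec_smul, crossMat_def]
    rw [show -((-γ) • (((cols A T)ᵀ * cols A T)⁻¹ * ((cols A T)ᵀ * cols A Δ)).mulVec
        ((schur A T Δ)⁻¹.mulVec g)) = γ • (((cols A T)ᵀ * cols A T)⁻¹ *
        ((cols A T)ᵀ * cols A Δ)).mulVec ((schur A T Δ)⁻¹.mulVec g) by module]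
    simp only [Matrix.mulVec_mulVec]
  · rw [hAd2, hdΔ, Matrix.mulVec_smul]

/-- The residual correlation at a column ω outside the support. -/
lemma resid_dot (γ : ℝ) (g : {j // j ∈ Δ} → ℝ) (d : Fin m → ℝ)
    (h3 : A.mulVec d = (-γ) • (projM A T * cols A Δ).mulVec ((schur A T Δ)⁻¹.mulVec g))
    (ω : Fin m) :
    ∑ i, A i ω * (A.mulVec d i) =
      -γ * ((schur A T Δ)⁻¹.mulVec (((cols A Δ)ᵀ * projM A T).mulVec (fun i => A i ω)) ⬝ᵥ g) := by
  have h4 : ∑ i, A i ω * (A.mulVec d i) = (fun i => A i ω) ⬝ᵥ (A.mulVec d) := rfl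
  rw [h4, h3, dotProduct_smul]
  rw [Matrix.dotProduct_mulVec, ← Matrix.mulVec_transpose, Matrix.transpose_mul, projM_transpose]
  rw [Matrix.dotProduct_mulVec (((cols A Δ)ᵀ * projM A T) *ᵥ (fun i => A i ω)),
    ← Matrix.mulVec_transpose, Matrix.transpose_nonsing_inv, schur_transpose]
  rw [smul_eq_mul]

end Solve

set_option maxHeartbeats 1000000 in
lemma exists_restr_min (A : Matrix (Fin n) (Fin m) ℝ) (y : Fin n → ℝ) {γ : ℝ} (hγ : 0 < γ)
    (T Ne : Finset (Fin m)) (hrank : IsUnit ((cols A Ne)ᵀ * cols A Ne)) :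
    ∃ b : Fin m → ℝ, suppOn b Ne ∧
      ∀ b', suppOn b' Ne → objL A y γ T b ≤ objL A y γ T b' := by
  classical
  set E := EuclideanSpace ℝ {j // j ∈ Ne} with hE
  set φ : E → ℝ := fun z => objL A y γ T (extv z) with hφdef
  -- continuity
  have hc1 : ∀ (j : Fin m), Continuous (fun z : E => extv z j) := by
    intro j
    by_cases h : j ∈ Ne
    · have : (fun z : E => extv z j) = fun z : E => z ⟨j, h⟩ := by
        funext z; exact extv_mem z h
      rw [this]
      exact (continuous_apply _).comp (PiLp.continuous_ofLp 2 _)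
    · have : (fun z : E => extv z j) = fun _ => 0 := by
        funext z; exact dif_neg h
      rw [this]; exact continuous_const
  have hmv : ∀ i, Continuous (fun z : E => A.mulVec (extv z) i) := by
    intro i
    have : (fun z : E => A.mulVec (extv z) i) = fun z : E => ∑ j, A i j * extv z.ofLp j := rfl
    rw [this]
    exact continuous_finset_sum _ (fun j _ => continuous_const.mul (hc1 j))
  have hφ : Continuous φ := by
    apply Continuous.add
    · exact continuous_const.mul (continuous_finset_sum _
        (fun i _ => ((continuous_const.sub (hmv i)).pow 2)))
    · exact continuous_const.mul (continuous_finset_sum _ (fun j _ => (hc1 j).abs))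
  -- the linear map and its antilipschitz constant
  set f := mulVecCLM (cols A Ne) with hf
  have hker : LinearMap.ker (f : E →ₗ[ℝ] EuclideanSpace ℝ (Fin n)) = ⊥ := by
    rw [LinearMap.ker_eq_bot]
    intro z z' hz
    have h1 : (cols A Ne).mulVec z = (cols A Ne).mulVec z' := congrArg WithLp.ofLp hz
    have : ((cols A Ne)ᵀ * cols A Ne).mulVec (z - z') = 0 := by
      rw [← Matrix.mulVec_mulVec, Matrix.mulVec_sub, h1, sub_self, Matrix.mulVec_zero]
    exact WithLp.ofLp_injective 2 (sub_eq_zero.mp (mulVec_isUnit_cancel hrank this))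
  obtain ⟨K, hK0, hKanti⟩ := LinearMap.exists_antilipschitzWith
    (f : E →ₗ[ℝ] EuclideanSpace ℝ (Fin n)) hker
  have hnorm : ∀ z : E, ‖z‖ ≤ K * ‖f z‖ := by
    intro z
    have := hKanti.le_mul_dist z 0
    simpa [map_zero] using this
  -- lower bound for φ
  set yv : EuclideanSpace ℝ (Fin n) := WithLp.toLp 2 y with hyv
  have hquad : ∀ z : E, ∑ i, (y i - A.mulVec (extv z) i) ^ 2 = ‖yv - f z‖ ^ 2 := by
    intro z
    have h1 : A.mulVec (extv z) = (cols A Ne).mulVec z := by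
      rw [mulVec_suppOn A (suppOn_extv z), subv_extv]
    rw [EuclideanSpace.norm_eq, Real.sq_sqrt (by positivity)]
    apply Finset.sum_congr rfl
    intro i _
    rw [h1]
    rw [Real.norm_eq_abs, sq_abs]
    rfl
  have hl1 : ∀ z : E, 0 ≤ l1c (extv z) T :=
    fun z => Finset.sum_nonneg (fun j _ => abs_nonneg _)
  have hφlb : ∀ z : E, (1/2) * ‖yv - f z‖ ^ 2 ≤ φ z := by
    intro z
    rw [hφdef]
    simp only [objL]
    rw [hquad z]
    nlinarith [hl1 z]
  -- eventual bound
  set s : ℝ := Real.sqrt (2 * φ 0) with hs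
  have hs0 : 0 ≤ s := Real.sqrt_nonneg _
  have hφ00 : 0 ≤ φ 0 := by
    have := hφlb 0
    nlinarith [sq_nonneg ‖yv - f 0‖, hl1 0]
  set R : ℝ := K * (‖yv‖ + s + 1) with hR
  have hev : ∀ᶠ z in Filter.cocompact E, φ 0 ≤ φ z := by
    rw [Filter.eventually_iff, Filter.mem_cocompact]
    refine ⟨Metric.closedBall 0 R, isCompact_closedBall _ _, ?_⟩
    intro z hz
    simp only [Set.mem_compl_iff, Metric.mem_closedBall, dist_zero_right, not_le] at hz
    have h1 : R < K * ‖f z‖ := lt_of_lt_of_le hz (hnorm z)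
    have hKpos : (0:ℝ) < K := hK0
    have h2 : ‖yv‖ + s + 1 < ‖f z‖ := by
      rw [hR] at h1
      by_contra hcon
      push_neg at hcon
      have := mul_le_mul_of_nonneg_left hcon (le_of_lt hKpos)
      linarith
    have h3 : s + 1 ≤ ‖yv - f z‖ := by
      have := norm_sub_norm_le (f z) yv
      rw [norm_sub_rev] at this
      linarith
    have h4 : 2 * φ 0 ≤ (s+1)^2 := by
      have hss : s^2 = 2 * φ 0 := Real.sq_sqrt (by linarith)
      nlinarith
    have h6 : (s+1)^2 ≤ ‖yv - f z‖^2 := by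
      apply pow_le_pow_left₀ (by linarith) h3
    have h5 := hφlb z
    simp only [Set.mem_setOf_eq]
    linarith
  obtain ⟨z0, hz0⟩ := hφ.exists_forall_le' 0 hev
  refine ⟨extv z0, suppOn_extv z0, ?_⟩
  intro b' hb'
  have : extv (subv b' Ne) = b' := by
    funext j
    by_cases h : j ∈ Ne
    · rw [extv_mem _ h]; rfl
    · rw [hb' j h]; exact dif_neg h
  calc objL A y γ T (extv z0) ≤ φ (WithLp.toLp 2 (subv b' Ne : {j // j ∈ Ne} → ℝ) : E) := hz0 _
    _ = objL A y γ T b' := by rw [hφdef]; simp only; rw [this]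

lemma convex_lower (A : Matrix (Fin n) (Fin m) ℝ) (y : Fin n → ℝ) {γ : ℝ} (hγ : 0 < γ)
    (T Δ : Finset (Fin m)) (hdisj : Disjoint T Δ)
    (bstar : Fin m → ℝ) (hsupp : suppOn bstar (T ∪ Δ))
    (v : Fin m → ℝ) (hv : v = fun j => ∑ i, A i j * (A.mulVec bstar i - y i))
    (hvT : ∀ j ∈ T, v j = 0)
    (hvΔ : ∀ j ∈ Δ, |v j| ≤ γ ∧ v j * bstar j = -(γ * |bstar j|))
    (hvout : ∀ j, j ∉ T ∪ Δ → |v j| ≤ γ)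
    (b : Fin m → ℝ) :
    objL A y γ T bstar + ∑ j ∈ (T ∪ Δ)ᶜ, (γ - |v j|) * |b j| ≤ objL A y γ T b := by
  set u : Fin m → ℝ := b - bstar with hu
  have huj : ∀ j, u j = b j - bstar j := fun j => rfl
  have hAu : ∀ i, A.mulVec u i = A.mulVec b i - A.mulVec bstar i := by
    intro i
    rw [hu, Matrix.mulVec_sub]
    rfl
  -- quadratic expansion
  have hquad : ∑ i, (y i - A.mulVec b i)^2 =
      ∑ i, (y i - A.mulVec bstar i)^2 + 2 * (∑ i, (A.mulVec bstar i - y i) * A.mulVec u i)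
        + ∑ i, (A.mulVec u i)^2 := by
    have hterm : ∀ i : Fin n, (y i - A.mulVec b i)^2 =
        (y i - A.mulVec bstar i)^2 + 2 * ((A.mulVec bstar i - y i) * A.mulVec u i)
          + (A.mulVec u i)^2 := by
      intro i
      rw [hAu i]
      ring
    rw [Finset.sum_congr rfl (fun i _ => hterm i), Finset.sum_add_distrib,
      Finset.sum_add_distrib, ← Finset.mul_sum]
  -- swap sums
  have hswap : ∑ i, (A.mulVec bstar i - y i) * A.mulVec u i = ∑ j, v j * u j := by
    have h1 : ∀ i, (A.mulVec bstar i - y i) * A.mulVec u i =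
        ∑ j, (A i j * (A.mulVec bstar i - y i)) * u j := by
      intro i
      rw [show A.mulVec u i = ∑ j, A i j * u j from rfl, Finset.mul_sum]
      apply Finset.sum_congr rfl
      intro j _
      ring
    rw [Finset.sum_congr rfl (fun i _ => h1 i), Finset.sum_comm]
    apply Finset.sum_congr rfl
    intro j _
    rw [hv, ← Finset.sum_mul]
  -- l1 split : Tᶜ = Δ ∪ (T ∪ Δ)ᶜ
  have hTc : Tᶜ = Δ ∪ (T ∪ Δ)ᶜ := by
    ext j
    simp only [Finset.mem_compl, Finset.mem_union]
    constructor
    · intro hT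
      by_cases hΔ : j ∈ Δ
      · exact Or.inl hΔ
      · exact Or.inr (not_or.mpr ⟨hT, hΔ⟩)
    · intro h
      rcases h with h | h
      · exact Finset.disjoint_right.mp hdisj h
      · tauto
  have hdisj2 : Disjoint Δ ((T ∪ Δ)ᶜ) :=
    Finset.disjoint_left.mpr
      (fun {j} hj hc => (Finset.mem_compl.mp hc) (Finset.mem_union_right T hj))
  have hl1split : ∀ c : Fin m → ℝ, l1c c T = ∑ j ∈ Δ, |c j| + ∑ j ∈ (T ∪ Δ)ᶜ, |c j| := by
    intro c
    rw [l1c, hTc, Finset.sum_union hdisj2]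
  -- sum of v*u split
  have husplit : ∑ j, v j * u j =
      ∑ j ∈ T, v j * u j + ∑ j ∈ Δ, v j * u j + ∑ j ∈ (T ∪ Δ)ᶜ, v j * u j := by
    rw [← Finset.sum_union hdisj, Finset.sum_add_sum_compl (T ∪ Δ)]
  have hTzero : ∑ j ∈ T, v j * u j = 0 :=
    Finset.sum_eq_zero (fun j hj => by rw [hvT j hj, zero_mul])
  -- generic regrouping
  have hgroup : ∀ s : Finset (Fin m),
      ∑ j ∈ s, (v j * u j + γ * (|b j| - |bstar j|)) =
      ∑ j ∈ s, v j * u j + γ * (∑ j ∈ s, |b j| - ∑ j ∈ s, |bstar j|) := by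
    intro s
    rw [Finset.sum_add_distrib]
    congr 1
    rw [← Finset.sum_sub_distrib, Finset.mul_sum]
  -- Δ terms
  have hΔterm : ∀ j ∈ Δ, 0 ≤ v j * u j + γ * (|b j| - |bstar j|) := by
    intro j hj
    obtain ⟨h1, h2⟩ := hvΔ j hj
    have hrw : v j * u j = v j * b j - v j * bstar j := by rw [huj j]; ring
    rw [hrw, h2]
    have h3 : -(|v j| * |b j|) ≤ v j * b j := by
      rw [← abs_mul]; exact neg_abs_le _
    have h4 : |v j| * |b j| ≤ γ * |b j| := mul_le_mul_of_nonneg_right h1 (abs_nonneg _)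
    linarith
  -- outside terms
  have houtterm : ∀ j, j ∈ (T ∪ Δ)ᶜ →
      (γ - |v j|) * |b j| ≤ v j * u j + γ * (|b j| - |bstar j|) := by
    intro j hj
    rw [Finset.mem_compl] at hj
    have hb0 : bstar j = 0 := hsupp j hj
    have hrw : v j * u j = v j * b j := by rw [huj j, hb0]; ring
    rw [hrw, hb0, abs_zero]
    have h3 : -(|v j| * |b j|) ≤ v j * b j := by
      rw [← abs_mul]; exact neg_abs_le _
    linarith
  -- put it together
  have e1 : objL A y γ T b - objL A y γ T bstar =
      (∑ j ∈ Δ, v j * u j + ∑ j ∈ (T ∪ Δ)ᶜ, v j * u j) + (1/2) * ∑ i, (A.mulVec u i)^2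
        + γ * ((∑ j ∈ Δ, |b j| + ∑ j ∈ (T ∪ Δ)ᶜ, |b j|)
          - (∑ j ∈ Δ, |bstar j| + ∑ j ∈ (T ∪ Δ)ᶜ, |bstar j|)) := by
    rw [objL, objL, hquad, hswap, husplit, hTzero, hl1split b, hl1split bstar]
    ring
  have e3 : 0 ≤ ∑ j ∈ Δ, v j * u j + γ * (∑ j ∈ Δ, |b j| - ∑ j ∈ Δ, |bstar j|) := by
    rw [← hgroup Δ]
    exact Finset.sum_nonneg (fun j hj => hΔterm j hj)
  have e4 : ∑ j ∈ (T ∪ Δ)ᶜ, (γ - |v j|) * |b j| ≤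
      ∑ j ∈ (T ∪ Δ)ᶜ, v j * u j
        + γ * (∑ j ∈ (T ∪ Δ)ᶜ, |b j| - ∑ j ∈ (T ∪ Δ)ᶜ, |bstar j|) := by
    rw [← hgroup ((T ∪ Δ)ᶜ)]
    exact Finset.sum_le_sum (fun j hj => houtterm j hj)
  have e5 : 0 ≤ (1/2) * ∑ i, (A.mulVec u i)^2 := by positivity
  linarith


-- additional norm lemmas
lemma l2v_nonneg {k : Type*} [Fintype k] (v : k → ℝ) : 0 ≤ l2v v := Real.sqrt_nonneg _

lemma l2v_sub_triangle {k : Type*} [Fintype k] (a b c : k → ℝ) :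
    l2v (a - c) ≤ l2v (a - b) + l2v (b - c) := by
  rw [show l2v (a - c) = ‖(WithLp.toLp 2 (a - c) : EuclideanSpace ℝ k)‖ from l2v_eq_norm _,
    show l2v (a - b) = ‖(WithLp.toLp 2 (a - b) : EuclideanSpace ℝ k)‖ from l2v_eq_norm _,
    show l2v (b - c) = ‖(WithLp.toLp 2 (b - c) : EuclideanSpace ℝ k)‖ from l2v_eq_norm _]
  have : (WithLp.toLp 2 (a - c) : EuclideanSpace ℝ k) =
      WithLp.toLp 2 (a - b) + WithLp.toLp 2 (b - c) := by ext i; simp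
  rw [this]
  exact norm_add_le _ _

lemma sq_sum_suppOn {S : Finset (Fin m)} {v : Fin m → ℝ} (hv : suppOn v S) :
    ∑ j, v j ^ 2 = ∑ j : {j // j ∈ S}, (subv v S j) ^ 2 := by
  rw [sum_sub_eq (fun j : {j // j ∈ S} => (subv v S j)^2) (fun j => v j ^ 2) (fun j h => rfl)]
  symm
  apply Finset.sum_subset (Finset.subset_univ S)
  intro j _ hj
  rw [hv j hj]
  norm_num

lemma l2v_suppOn {S : Finset (Fin m)} {v : Fin m → ℝ} (hv : suppOn v S) :
    l2v v = l2v (subv v S) := by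
  rw [l2v, l2v, sq_sum_suppOn hv]

lemma sq_sum_split {T Δ : Finset (Fin m)} (hdisj : Disjoint T Δ) {v : Fin m → ℝ}
    (hv : suppOn v (T ∪ Δ)) :
    ∑ j, v j ^ 2 = ∑ j : {j // j ∈ T}, (subv v T j) ^ 2
      + ∑ j : {j // j ∈ Δ}, (subv v Δ j) ^ 2 := by
  rw [sum_sub_eq (fun j : {j // j ∈ T} => (subv v T j)^2) (fun j => v j ^ 2) (fun j h => rfl),
    sum_sub_eq (fun j : {j // j ∈ Δ} => (subv v Δ j)^2) (fun j => v j ^ 2) (fun j h => rfl),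
    ← Finset.sum_union hdisj]
  symm
  apply Finset.sum_subset (Finset.subset_univ _)
  intro j _ hj
  rw [hv j hj]
  norm_num

lemma l2v_smul {k : Type*} [Fintype k] (c : ℝ) (w : k → ℝ) :
    l2v (c • w) = |c| * l2v w := by
  rw [l2v, l2v]
  have : ∑ i, (c • w) i ^ 2 = c^2 * ∑ i, w i ^ 2 := by
    rw [Finset.mul_sum]
    apply Finset.sum_congr rfl
    intro i _
    rw [Pi.smul_apply, smul_eq_mul]
    ring
  rw [this, Real.sqrt_mul (sq_nonneg c), Real.sqrt_sq_eq_abs]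

lemma l2v_le_sqrt_card {k : Type*} [Fintype k] {g : k → ℝ} (hg : ∀ j, |g j| ≤ 1) :
    l2v g ≤ Real.sqrt (Fintype.card k) := by
  apply Real.sqrt_le_sqrt
  calc ∑ j, g j ^ 2 ≤ ∑ _j : k, (1:ℝ) := by
        apply Finset.sum_le_sum
        intro j _
        rw [← sq_abs]
        nlinarith [hg j, abs_nonneg (g j)]
    _ = Fintype.card k := by simp
  
lemma abs_le_linfv {k : Type*} [Fintype k] (v : k → ℝ) (i : k) : |v i| ≤ linfv v :=
  le_ciSup (f := fun i => |v i|) (Set.Finite.bddAbove (Set.finite_range _)) i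

lemma dot_le_l1v {k : Type*} [Fintype k] (u g : k → ℝ) (hg : ∀ j, |g j| ≤ 1) :
    |u ⬝ᵥ g| ≤ l1v u := by
  rw [dotProduct, l1v]
  calc |∑ j, u j * g j| ≤ ∑ j, |u j * g j| := Finset.abs_sum_le_sum_abs _ _
    _ ≤ ∑ j, |u j| := by
        apply Finset.sum_le_sum
        intro j _
        rw [abs_mul]
        calc |u j| * |g j| ≤ |u j| * 1 := by
              exact mul_le_mul_of_nonneg_left (hg j) (abs_nonneg _)
          _ = |u j| := mul_one _

lemma normal_eq (A : Matrix (Fin n) (Fin m) ℝ) (Ne : Finset (Fin m))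
    (hrank : IsUnit ((cols A Ne)ᵀ * cols A Ne)) (y : Fin n → ℝ) :
    ∀ j ∈ Ne, ∑ i, A i j * (A.mulVec (lsqFull A Ne y) i - y i) = 0 := by
  intro j hj
  set c : Fin m → ℝ := lsqFull A Ne y with hc
  have hsuppc : suppOn c Ne := fun j hj => dif_neg hj
  have hsubvc : subv c Ne = lsq A Ne y := by
    funext j
    rw [subv]
    exact dif_pos j.2
  have hAc : A.mulVec c = (cols A Ne).mulVec (lsq A Ne y) := by
    rw [mulVec_suppOn A hsuppc, hsubvc]
  have hvec : (cols A Ne)ᵀ.mulVec (A.mulVec c - y) = 0 := by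
    rw [Matrix.mulVec_sub, hAc, lsq, Matrix.mulVec_mulVec, Matrix.mulVec_mulVec,
      Matrix.mul_nonsing_inv _ ((Matrix.isUnit_iff_isUnit_det _).mp hrank),
      Matrix.one_mulVec, sub_self]
  have := congrFun hvec ⟨j, hj⟩
  rw [colsT_mulVec_apply] at this
  simpa using this

/-- modified-BPDN theorem, ℓ² bound for the global minimizer. -/
theorem stmt11 (n m : ℕ) (A : Matrix (Fin n) (Fin m) ℝ) (T Δ N : Finset (Fin m))
    (hdisj : Disjoint T Δ) (hNNe : N ⊆ T ∪ Δ)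
    (hrank : IsUnit ((cols A (T ∪ Δ))ᵀ * cols A (T ∪ Δ)))
    (γ : ℝ) (hγ : 0 < γ) (x : Fin m → ℝ) (hx : suppOn x N)
    (wn : Fin n → ℝ) (y : Fin n → ℝ) (hy : y = A.mulVec x + wn)
    (hcond : ∀ ω, ω ∉ T ∪ Δ →
      linfv (Aᵀ.mulVec (y - (cols A (T ∪ Δ)).mulVec (lsq A (T ∪ Δ) y))) <
        γ * (1 - erc A T Δ ω))
    (btil : Fin m → ℝ) (hglob : ∀ b, objL A y γ T btil ≤ objL A y γ T b) :
    l2v (btil - x) ≤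
      spec (((cols A (T ∪ Δ))ᵀ * cols A (T ∪ Δ))⁻¹ * (cols A (T ∪ Δ))ᵀ) * l2v wn +
      γ * Real.sqrt (Δ.card) *
        Real.sqrt (spec (crossMat A T Δ) ^ 2 + spec ((schur A T Δ)⁻¹) ^ 2) := by
  classical
  -- least squares vector
  set cv : Fin m → ℝ := lsqFull A (T ∪ Δ) y with hcv
  have hsuppc : suppOn cv (T ∪ Δ) := fun j hj => dif_neg hj
  have hsubvc : subv cv (T ∪ Δ) = lsq A (T ∪ Δ) y := by
    funext j; rw [subv]; exact dif_pos j.2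
  have hnorm := normal_eq A (T ∪ Δ) hrank y
  -- correction identity
  have hcorr : ∀ (b : Fin m → ℝ) (j : Fin m), j ∈ T ∪ Δ →
      ∑ i, A i j * (A.mulVec (b - cv) i) = ∑ i, A i j * (A.mulVec b i - y i) := by
    intro b j hj
    calc ∑ i, A i j * (A.mulVec (b - cv) i)
        = ∑ i, (A i j * (A.mulVec b i - y i) - A i j * (A.mulVec cv i - y i)) := by
          apply Finset.sum_congr rfl; intro i _
          simp only [Matrix.mulVec_sub, Pi.sub_apply]
          ring
      _ = ∑ i, A i j * (A.mulVec b i - y i) - ∑ i, A i j * (A.mulVec cv i - y i) :=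
          Finset.sum_sub_distrib _ _
      _ = ∑ i, A i j * (A.mulVec b i - y i) := by rw [hnorm j hj, sub_zero]
  -- restricted minimizer
  obtain ⟨bstar, hbs_supp, hbs_min⟩ := exists_restr_min A y hγ T (T ∪ Δ) hrank
  set vst : Fin m → ℝ := fun j => ∑ i, A i j * (A.mulVec bstar i - y i) with hvst
  have hkkts := fun (j : Fin m) (hj : j ∈ T ∪ Δ) =>
    kkt_coord A y hγ T (T ∪ Δ) bstar hbs_supp hbs_min j hj
  have hvT : ∀ j ∈ T, vst j = 0 := fun j hj =>
    (hkkts j (Finset.mem_union_left _ hj)).1 hj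
  have hvΔ : ∀ j ∈ Δ, |vst j| ≤ γ ∧ vst j * bstar j = -(γ * |bstar j|) := fun j hj =>
    (hkkts j (Finset.mem_union_right _ hj)).2 (Finset.disjoint_right.mp hdisj hj)
  -- KKT solve at bstar
  set gst : {j // j ∈ Δ} → ℝ := fun j => -(vst j.1) / γ with hgst
  have hgst1 : ∀ j : {j // j ∈ Δ}, |gst j| ≤ 1 := by
    intro j
    rw [hgst]
    simp only
    rw [abs_div, abs_neg, abs_of_pos hγ]
    exact div_le_one_of_le₀ (hvΔ j.1 j.2).1 hγ.le
  have hsuppd : suppOn (bstar - cv) (T ∪ Δ) := by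
    intro j hj
    simp [hbs_supp j hj, hsuppc j hj]
  have hE1 : ∀ j ∈ T, ∑ i, A i j * (A.mulVec (bstar - cv) i) = 0 := by
    intro j hj
    rw [hcorr bstar j (Finset.mem_union_left _ hj)]
    exact hvT j hj
  have hE2 : ∀ (j : Fin m) (h : j ∈ Δ),
      ∑ i, A i j * (A.mulVec (bstar - cv) i) = -γ * gst ⟨j, h⟩ := by
    intro j h
    rw [hcorr bstar j (Finset.mem_union_right _ h), hgst]
    simp only
    field_simp
    rfl
  obtain ⟨hdΔ, hdT, hAd3⟩ := kkt_solve A T Δ hdisj hrank γ gst (bstar - cv) hsuppd hE1 hE2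
  -- strict bound outside the support
  have hvout : ∀ ω, ω ∉ T ∪ Δ → |vst ω| < γ := by
    intro ω hω
    have hr := resid_dot A T Δ γ gst (bstar - cv) hAd3 ω
    have hAc : A.mulVec cv = (cols A (T ∪ Δ)).mulVec (lsq A (T ∪ Δ) y) := by
      rw [mulVec_suppOn A hsuppc, hsubvc]
    have hsplitω : vst ω = (∑ i, A i ω * (A.mulVec (bstar - cv) i))
        + ∑ i, A i ω * (A.mulVec cv i - y i) := by
      rw [hvst]
      simp only
      rw [← Finset.sum_add_distrib]
      apply Finset.sum_congr rfl
      intro i _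
      simp only [Matrix.mulVec_sub, Pi.sub_apply]
      ring
    have hQ : |∑ i, A i ω * (A.mulVec cv i - y i)| ≤
        linfv (Aᵀ.mulVec (y - (cols A (T ∪ Δ)).mulVec (lsq A (T ∪ Δ) y))) := by
      have he : ∑ i, A i ω * (A.mulVec cv i - y i) =
          -((Aᵀ.mulVec (y - (cols A (T ∪ Δ)).mulVec (lsq A (T ∪ Δ) y))) ω) := by
        rw [← hAc]
        rw [show (Aᵀ.mulVec (y - A.mulVec cv)) ω = ∑ i, A i ω * (y i - A.mulVec cv i) from rfl]
        rw [← Finset.sum_neg_distrib]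
        apply Finset.sum_congr rfl; intro i _; ring
      rw [he, abs_neg]
      exact abs_le_linfv _ ω
    have herc : |∑ i, A i ω * (A.mulVec (bstar - cv) i)| ≤ γ * erc A T Δ ω := by
      have hercdef : erc A T Δ ω = l1v ((schur A T Δ)⁻¹.mulVec
          (((cols A Δ)ᵀ * projM A T).mulVec (fun i => A i ω))) := rfl
      rw [hr, abs_mul, abs_neg, abs_of_pos hγ, hercdef]
      exact mul_le_mul_of_nonneg_left (dot_le_l1v _ _ hgst1) hγ.le
    have hcondω := hcond ω hω
    have habs : |vst ω| ≤ (γ * erc A T Δ ω) +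
        linfv (Aᵀ.mulVec (y - (cols A (T ∪ Δ)).mulVec (lsq A (T ∪ Δ) y))) := by
      rw [hsplitω]
      exact (abs_add_le _ _).trans (by linarith)
    have hring : γ * (1 - erc A T Δ ω) = γ - γ * erc A T Δ ω := by ring
    linarith
  -- btil is supported on T ∪ Δ
  have hlower := convex_lower A y hγ T Δ hdisj bstar hbs_supp vst hvst hvT hvΔ
    (fun j hj => (hvout j hj).le)
  have hsupp_btil : suppOn btil (T ∪ Δ) := by
    have hsum : ∑ j ∈ (T ∪ Δ)ᶜ, (γ - |vst j|) * |btil j| ≤ 0 := by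
      have h1 := hlower btil
      have h2 := hglob bstar
      linarith
    have hterm : ∀ j ∈ (T ∪ Δ)ᶜ, 0 ≤ (γ - |vst j|) * |btil j| := by
      intro j hjc
      have h1 := hvout j (Finset.mem_compl.mp hjc)
      have h2 := abs_nonneg (btil j)
      nlinarith
    have hzero := (Finset.sum_eq_zero_iff_of_nonneg hterm).mp
      (le_antisymm hsum (Finset.sum_nonneg hterm))
    intro j hj
    have h0 := hzero j (Finset.mem_compl.mpr hj)
    have hpos := hvout j hj
    rcases mul_eq_zero.mp h0 with h | h
    · linarith
    · exact abs_eq_zero.mp h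
  -- KKT at btil
  have hbt_min : ∀ b', suppOn b' (T ∪ Δ) → objL A y γ T btil ≤ objL A y γ T b' :=
    fun b' _ => hglob b'
  set vbt : Fin m → ℝ := fun j => ∑ i, A i j * (A.mulVec btil i - y i) with hvbt
  have hkktb := fun (j : Fin m) (hj : j ∈ T ∪ Δ) =>
    kkt_coord A y hγ T (T ∪ Δ) btil hsupp_btil hbt_min j hj
  have hvbT : ∀ j ∈ T, vbt j = 0 := fun j hj =>
    (hkktb j (Finset.mem_union_left _ hj)).1 hj
  have hvbΔ : ∀ j ∈ Δ, |vbt j| ≤ γ := fun j hj =>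
    ((hkktb j (Finset.mem_union_right _ hj)).2 (Finset.disjoint_right.mp hdisj hj)).1
  set gbt : {j // j ∈ Δ} → ℝ := fun j => -(vbt j.1) / γ with hgbt
  have hgbt1 : ∀ j : {j // j ∈ Δ}, |gbt j| ≤ 1 := by
    intro j
    rw [hgbt]
    simp only
    rw [abs_div, abs_neg, abs_of_pos hγ]
    exact div_le_one_of_le₀ (hvbΔ j.1 j.2) hγ.le
  have hsuppd2 : suppOn (btil - cv) (T ∪ Δ) := by
    intro j hj
    simp [hsupp_btil j hj, hsuppc j hj]
  have hE1b : ∀ j ∈ T, ∑ i, A i j * (A.mulVec (btil - cv) i) = 0 := by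
    intro j hj
    rw [hcorr btil j (Finset.mem_union_left _ hj)]
    exact hvbT j hj
  have hE2b : ∀ (j : Fin m) (h : j ∈ Δ),
      ∑ i, A i j * (A.mulVec (btil - cv) i) = -γ * gbt ⟨j, h⟩ := by
    intro j h
    rw [hcorr btil j (Finset.mem_union_right _ h), hgbt]
    simp only
    field_simp
    rfl
  obtain ⟨hd2Δ, hd2T, -⟩ := kkt_solve A T Δ hdisj hrank γ gbt (btil - cv) hsuppd2 hE1b hE2b
  -- c - x identity
  have hsuppx : suppOn x (T ∪ Δ) := fun j hj => hx j (fun hN => hj (hNNe hN))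
  have hsuppcx : suppOn (cv - x) (T ∪ Δ) := by
    intro j hj
    simp [hsuppc j hj, hsuppx j hj]
  have hcx : subv (cv - x) (T ∪ Δ) =
      ((((cols A (T ∪ Δ))ᵀ * cols A (T ∪ Δ))⁻¹) * (cols A (T ∪ Δ))ᵀ).mulVec wn := by
    have hAx : A.mulVec x = (cols A (T ∪ Δ)).mulVec (subv x (T ∪ Δ)) := mulVec_suppOn A hsuppx
    have h1 : subv cv (T ∪ Δ) = subv x (T ∪ Δ)
        + ((((cols A (T ∪ Δ))ᵀ * cols A (T ∪ Δ))⁻¹) * (cols A (T ∪ Δ))ᵀ).mulVec wn := by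
      have e : (cols A (T ∪ Δ))ᵀ.mulVec y =
          ((cols A (T ∪ Δ))ᵀ * cols A (T ∪ Δ)).mulVec (subv x (T ∪ Δ))
            + (cols A (T ∪ Δ))ᵀ.mulVec wn := by
        rw [hy, Matrix.mulVec_add, hAx, Matrix.mulVec_mulVec]
      rw [hsubvc, lsq, e, Matrix.mulVec_add, Matrix.mulVec_mulVec, Matrix.mulVec_mulVec,
        Matrix.nonsing_inv_mul _ ((Matrix.isUnit_iff_isUnit_det _).mp hrank), Matrix.one_mulVec]
    funext j
    have := congrFun h1 j
    rw [Pi.add_apply] at this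
    rw [show subv (cv - x) (T ∪ Δ) j = subv cv (T ∪ Δ) j - subv x (T ∪ Δ) j from rfl, this]
    ring
  -- first bound
  have hbnd1 : l2v (cv - x) ≤
      spec ((((cols A (T ∪ Δ))ᵀ * cols A (T ∪ Δ))⁻¹) * (cols A (T ∪ Δ))ᵀ) * l2v wn := by
    rw [l2v_suppOn hsuppcx, hcx]
    exact l2v_mulVec_le _ wn
  -- second bound
  have ha : l2v (subv (btil - cv) T) ≤ γ * (spec (crossMat A T Δ) * l2v gbt) := by
    rw [hd2T, l2v_smul, abs_of_pos hγ]
    exact mul_le_mul_of_nonneg_left (l2v_mulVec_le _ _) hγ.le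
  have hb : l2v (subv (btil - cv) Δ) ≤ γ * (spec ((schur A T Δ)⁻¹) * l2v gbt) := by
    rw [hd2Δ, l2v_smul, abs_neg, abs_of_pos hγ]
    exact mul_le_mul_of_nonneg_left (l2v_mulVec_le _ _) hγ.le
  have hL : l2v gbt ≤ Real.sqrt (Δ.card) := by
    have := l2v_le_sqrt_card hgbt1
    rwa [Fintype.card_coe] at this
  have hsq : l2v (btil - cv) = Real.sqrt ((l2v (subv (btil - cv) T))^2
      + (l2v (subv (btil - cv) Δ))^2) := by
    rw [l2v, sq_sum_split hdisj hsuppd2]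
    congr 1
    rw [l2v, l2v, Real.sq_sqrt (Finset.sum_nonneg fun i _ => sq_nonneg _),
      Real.sq_sqrt (Finset.sum_nonneg fun i _ => sq_nonneg _)]
  have hbnd2 : l2v (btil - cv) ≤ γ * Real.sqrt (Δ.card) *
      Real.sqrt (spec (crossMat A T Δ) ^ 2 + spec ((schur A T Δ)⁻¹) ^ 2) := by
    rw [hsq]
    have hstep1 : Real.sqrt ((l2v (subv (btil - cv) T))^2 + (l2v (subv (btil - cv) Δ))^2)
        ≤ Real.sqrt ((γ * (spec (crossMat A T Δ) * l2v gbt))^2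
          + (γ * (spec ((schur A T Δ)⁻¹) * l2v gbt))^2) := by
      apply Real.sqrt_le_sqrt
      have h1 := l2v_nonneg (subv (btil - cv) T)
      have h2 := l2v_nonneg (subv (btil - cv) Δ)
      nlinarith [ha, hb]
    have hstep2 : Real.sqrt ((γ * (spec (crossMat A T Δ) * l2v gbt))^2
        + (γ * (spec ((schur A T Δ)⁻¹) * l2v gbt))^2)
        = γ * l2v gbt * Real.sqrt (spec (crossMat A T Δ) ^ 2 + spec ((schur A T Δ)⁻¹) ^ 2) := by
      rw [show (γ * (spec (crossMat A T Δ) * l2v gbt))^2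
          + (γ * (spec ((schur A T Δ)⁻¹) * l2v gbt))^2
          = (γ * l2v gbt)^2 * (spec (crossMat A T Δ) ^ 2 + spec ((schur A T Δ)⁻¹) ^ 2) by ring,
        Real.sqrt_mul (sq_nonneg _), Real.sqrt_sq (mul_nonneg hγ.le (l2v_nonneg _))]
    have hstep3 : γ * l2v gbt * Real.sqrt (spec (crossMat A T Δ) ^ 2
        + spec ((schur A T Δ)⁻¹) ^ 2) ≤ γ * Real.sqrt (Δ.card) *
        Real.sqrt (spec (crossMat A T Δ) ^ 2 + spec ((schur A T Δ)⁻¹) ^ 2) := by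
      apply mul_le_mul_of_nonneg_right _ (Real.sqrt_nonneg _)
      exact mul_le_mul_of_nonneg_left hL hγ.le
    calc Real.sqrt ((l2v (subv (btil - cv) T))^2 + (l2v (subv (btil - cv) Δ))^2)
        ≤ _ := hstep1
      _ = _ := hstep2
      _ ≤ _ := hstep3
  -- combine
  calc l2v (btil - x) ≤ l2v (btil - cv) + l2v (cv - x) := l2v_sub_triangle _ _ _
    _ ≤ spec ((((cols A (T ∪ Δ))ᵀ * cols A (T ∪ Δ))⁻¹) * (cols A (T ∪ Δ))ᵀ) * l2v wn +
        γ * Real.sqrt (Δ.card) *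
          Real.sqrt (spec (crossMat A T Δ) ^ 2 + spec ((schur A T Δ)⁻¹) ^ 2) := by
      linarith
end
end

section
/- Let T, Δ be disjoint, N_e = T∪Δ, A_{N_e} full column rank, M = I − A_T(A_T'A_T)^{-1}A_T', b̃ the minimizer of L over vectors supported on N_e, c the least-squares solution on N_e, and g the subgradient from the minimizer characterization (g supported on Δ, ‖g_Δ‖_∞ ≤ 1). Then A_{N_e}(c_{N_e} − b̃_{N_e}) = γ M A_Δ (A_Δ' M A_Δ)^{-1} g_Δ. -/
open Matrix Finset

noncomputable section

variable {n m : ℕ}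

/-- A_{N_e}(c_{N_e} − b̃_{N_e}) = γ M A_Δ (A_Δᵀ M A_Δ)⁻¹ g_Δ. -/
theorem stmt16 (n m : ℕ) (A : Matrix (Fin n) (Fin m) ℝ) (T Δ : Finset (Fin m))
    (hdisj : Disjoint T Δ)
    (hrank : IsUnit ((cols A (T ∪ Δ))ᵀ * cols A (T ∪ Δ)))
    (hT : IsUnit ((cols A T)ᵀ * cols A T)) (hschur : IsUnit (schur A T Δ))
    (γ : ℝ) (hγ : 0 < γ) (y : Fin n → ℝ) (btil g : Fin m → ℝ)
    (hgsupp : suppOn g Δ) (hglinf : linfv g ≤ 1)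
    (hchar : lsq A (T ∪ Δ) y - subv btil (T ∪ Δ) =
      γ • (((cols A (T ∪ Δ))ᵀ * cols A (T ∪ Δ))⁻¹.mulVec (subv g (T ∪ Δ)))) :
    (cols A (T ∪ Δ)).mulVec (lsq A (T ∪ Δ) y - subv btil (T ∪ Δ)) =
      γ • ((projM A T * cols A Δ * (schur A T Δ)⁻¹).mulVec (subv g Δ)) := by
  classical
  have hdetT : IsUnit ((cols A T)ᵀ * cols A T).det :=
    (Matrix.isUnit_iff_isUnit_det _).mp hT
  have hdetN : IsUnit ((cols A (T ∪ Δ))ᵀ * cols A (T ∪ Δ)).det :=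
    (Matrix.isUnit_iff_isUnit_det _).mp hrank
  have hdetS : IsUnit (schur A T Δ).det := (Matrix.isUnit_iff_isUnit_det _).mp hschur
  -- key: A_Tᵀ * M = 0
  have hTM : (cols A T)ᵀ * projM A T = 0 := by
    unfold projM
    rw [Matrix.mul_sub, Matrix.mul_one]
    simp only [← Matrix.mul_assoc]
    rw [Matrix.mul_nonsing_inv _ hdetT, Matrix.one_mul, sub_self]
  set u : {j // j ∈ Δ} → ℝ := (schur A T Δ)⁻¹.mulVec (subv g Δ) with hu
  set B : Matrix {j // j ∈ T} {j // j ∈ Δ} ℝ :=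
    ((cols A T)ᵀ * cols A T)⁻¹ * ((cols A T)ᵀ * cols A Δ) with hB
  set v : Fin n → ℝ := (projM A T * cols A Δ).mulVec u with hv
  -- M * A_Δ = A_Δ - A_T * B
  have hMAΔ : projM A T * cols A Δ = cols A Δ - cols A T * B := by
    unfold projM
    rw [Matrix.sub_mul, Matrix.one_mul, hB]
    simp only [← Matrix.mul_assoc]
  -- extended coefficient vector
  set W : Fin m → ℝ := fun j =>
    if h : j ∈ Δ then u ⟨j, h⟩ else if h : j ∈ T then -((B.mulVec u) ⟨j, h⟩) else 0
    with hW
  have hWΔ : ∀ (j : Fin m) (h : j ∈ Δ), W j = u ⟨j, h⟩ := by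
    intro j h; simp [hW, h]
  have hWT : ∀ (j : Fin m) (h : j ∈ T), W j = -((B.mulVec u) ⟨j, h⟩) := by
    intro j h
    have hjΔ : j ∉ Δ := fun hh => (Finset.disjoint_left.mp hdisj h) hh
    simp [hW, h, hjΔ]
  -- claim 1 : A_N *ᵥ (W restricted) = v
  have hANw : (cols A (T ∪ Δ)).mulVec (subv W (T ∪ Δ)) = v := by
    funext i
    have hsplit : (cols A (T ∪ Δ)).mulVec (subv W (T ∪ Δ)) i
        = ∑ j ∈ T ∪ Δ, A i j * W j := by
      rw [Matrix.mulVec, dotProduct]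
      rw [Finset.sum_subtype (T ∪ Δ) (fun x => Iff.rfl) (fun j => A i j * W j)]
      rfl
    rw [hsplit, Finset.sum_union hdisj]
    have hT' : ∑ j ∈ T, A i j * W j = -((cols A T).mulVec (B.mulVec u) i) := by
      rw [Matrix.mulVec, dotProduct, ← Finset.sum_neg_distrib,
        Finset.sum_subtype T (fun x => Iff.rfl) (fun j => A i j * W j)]
      refine Finset.sum_congr rfl fun x _ => ?_
      rw [hWT x.1 x.2]
      show A i x.1 * -(B.mulVec u) x = -(A i x.1 * (B.mulVec u) x)
      ring
    have hΔ' : ∑ j ∈ Δ, A i j * W j = (cols A Δ).mulVec u i := by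
      rw [Matrix.mulVec, dotProduct,
        Finset.sum_subtype Δ (fun x => Iff.rfl) (fun j => A i j * W j)]
      refine Finset.sum_congr rfl fun x _ => ?_
      rw [hWΔ x.1 x.2]
      rfl
    rw [hT', hΔ', hv, hMAΔ, Matrix.sub_mulVec]
    show _ = (cols A Δ).mulVec u i - (cols A T * B).mulVec u i
    rw [Matrix.mulVec_mulVec]
    ring
  -- claim 2 : A_Nᵀ *ᵥ v = subv g (T ∪ Δ)
  have hATv : (cols A (T ∪ Δ))ᵀ.mulVec v = subv g (T ∪ Δ) := by
    funext j
    obtain ⟨j, hj⟩ := j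
    have hentry : (cols A (T ∪ Δ))ᵀ.mulVec v ⟨j, hj⟩ = ∑ i, A i j * v i := rfl
    rcases Finset.mem_union.mp hj with hjT | hjΔ
    · have h0 : ((cols A T)ᵀ * (projM A T * cols A Δ)).mulVec u = 0 := by
        rw [← Matrix.mul_assoc, hTM, Matrix.zero_mul, Matrix.zero_mulVec]
      have : (cols A T)ᵀ.mulVec v ⟨j, hjT⟩ = 0 := by
        rw [hv, Matrix.mulVec_mulVec, h0]; rfl
      have h1 : ∑ i, A i j * v i = 0 := this
      have hjΔ' : j ∉ Δ := fun hh => (Finset.disjoint_left.mp hdisj hjT) hh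
      rw [hentry, h1]
      exact (hgsupp j hjΔ').symm
    · have h2 : ((cols A Δ)ᵀ * (projM A T * cols A Δ)).mulVec u = subv g Δ := by
        rw [← Matrix.mul_assoc]
        show (schur A T Δ).mulVec ((schur A T Δ)⁻¹.mulVec (subv g Δ)) = subv g Δ
        rw [Matrix.mulVec_mulVec, Matrix.mul_nonsing_inv _ hdetS, Matrix.one_mulVec]
      have : (cols A Δ)ᵀ.mulVec v ⟨j, hjΔ⟩ = subv g Δ ⟨j, hjΔ⟩ := by
        rw [hv, Matrix.mulVec_mulVec, h2]
      have h1 : ∑ i, A i j * v i = g j := this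
      rw [hentry, h1]; rfl
  -- combine
  have hgN : subv g (T ∪ Δ) = ((cols A (T ∪ Δ))ᵀ * cols A (T ∪ Δ)).mulVec (subv W (T ∪ Δ)) := by
    rw [← Matrix.mulVec_mulVec, hANw, hATv]
  have hinv : ((cols A (T ∪ Δ))ᵀ * cols A (T ∪ Δ))⁻¹.mulVec (subv g (T ∪ Δ))
      = subv W (T ∪ Δ) := by
    rw [hgN, Matrix.mulVec_mulVec, Matrix.nonsing_inv_mul _ hdetN, Matrix.one_mulVec]
  rw [hchar, hinv, Matrix.mulVec_smul, hANw, hv]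
  simp only [hu, Matrix.mulVec_mulVec, Matrix.mul_assoc]
end
end
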